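/- arXiv:1611.01115 — 6 statements merged into one kernel-verified Lean document; each statement's English description precedes it below -/
import Mathlib

section
/- For all integers n, m ≥ 1, the number of taxi walks satisfies c_{n+m} ≤ c_n · c_m. -/
open Filter

/-- The oriented step relation of the Manhattan lattice. -/
def taxiStep (u v : ℤ × ℤ) : Prop :=
  (Even u.2 ∧ v = (u.1 + 1, u.2)) ∨
  (Odd u.2 ∧ v = (u.1 - 1, u.2)) ∨
  (Even u.1 ∧ v = (u.1, u.2 + 1)) ∨
  (Odd u.1 ∧ v = (u.1, u.2 - 1))

/-- Perpendicularity of two step vectors. -/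
def perp (d e : ℤ × ℤ) : Prop := d.1 * e.1 + d.2 * e.2 = 0

instance (d e : ℤ × ℤ) : Decidable (perp d e) := by unfold perp; infer_instance

/-- The walk `l` turns at its `i`-th vertex (meaningful for `1 ≤ i ≤ l.length - 2`). -/
def turnAt (l : List (ℤ × ℤ)) (i : ℕ) : Prop :=
  perp (l.getD i 0 - l.getD (i - 1) 0) (l.getD (i + 1) 0 - l.getD i 0)

instance (l : List (ℤ × ℤ)) (i : ℕ) : Decidable (turnAt l i) := by
  unfold turnAt; infer_instance

/-- A taxi walk, recorded as its list of vertices (a walk of length `n` has `n + 1` vertices). -/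
def IsTaxiWalk (l : List (ℤ × ℤ)) : Prop :=
  l ≠ [] ∧ l.Nodup ∧
  (∀ i, i + 1 < l.length → taxiStep (l.getD i 0) (l.getD (i + 1) 0)) ∧
  (∀ i, 1 ≤ i → i + 2 < l.length → ¬(turnAt l i ∧ turnAt l (i + 1)))

/-- The set of taxi walks of length `n` starting at the origin. -/
def originWalks (n : ℕ) : Set (List (ℤ × ℤ)) :=
  {l | IsTaxiWalk l ∧ l.length = n + 1 ∧ l.getD 0 0 = 0}

/-- `taxiCount n` is `c_n`, the number of taxi walks of length `n` starting at the origin. -/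
noncomputable def taxiCount (n : ℕ) : ℕ := (originWalks n).ncard

/-- The turn-word of a walk: `true` (the letter `t`) where the walk turns,
`false` (the letter `s`) where it goes straight. -/
def turnWord (l : List (ℤ × ℤ)) : List Bool :=
  (List.range (l.length - 2)).map fun i => decide (turnAt l (i + 1))

/-- The encoding of a taxi walk starting at the origin: the first coordinate is `true`
(for `N`) if `v₁ = (0,1)` and `false` (for `E`) if `v₁ = (1,0)`; the second is the turn-word. -/
def encode (l : List (ℤ × ℤ)) : Bool × List Bool :=
  (decide (l.getD 1 0 = (0, 1)), turnWord l)

/-- A bridge: a taxi walk from `(0,0)` to `(1,0)` staying at abscissa `≥ 1` after the start,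
whose last step is horizontal and ends at maximal abscissa. -/
def IsBridge (l : List (ℤ × ℤ)) : Prop :=
  IsTaxiWalk l ∧ 2 ≤ l.length ∧ l.getD 0 0 = (0, 0) ∧ l.getD 1 0 = (1, 0) ∧
  (∀ i, 1 ≤ i → i < l.length → 1 ≤ (l.getD i 0).1) ∧
  (l.getD (l.length - 1) 0).2 = (l.getD (l.length - 2) 0).2 ∧
  (∀ i, i < l.length → (l.getD i 0).1 ≤ (l.getD (l.length - 1) 0).1)

/-- `bridgeCount n` is `b_n`, the number of bridges of length `n`, with `b_0 = 1`. -/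
noncomputable def bridgeCount : ℕ → ℕ
  | 0 => 1
  | n + 1 => {l : List (ℤ × ℤ) | IsBridge l ∧ l.length = n + 2}.ncard

/-- The normalizing symmetry `f_{(x,y)}` of the oriented Manhattan lattice. -/
def normMap (p : ℤ × ℤ) (q : ℤ × ℤ) : ℤ × ℤ :=
  if Even p.1 then
    (if Even p.2 then (q.1 - p.1, q.2 - p.2) else (-(q.1 - p.1), q.2 - p.2))
  else
    (if Even p.2 then (q.1 - p.1, -(q.2 - p.2)) else (-(q.1 - p.1), -(q.2 - p.2)))

/-- The vertex `v_i` is a cutvertex of the bridge `l`. -/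
def IsCutAt (l : List (ℤ × ℤ)) (i : ℕ) : Prop :=
  0 < i ∧ i + 1 < l.length ∧
  IsBridge (l.take (i + 1)) ∧
  l.getD (i + 1) 0 = l.getD i 0 + (1, 0) ∧
  IsBridge ((l.drop i).map (normMap (l.getD i 0)))

/-- An irreducible bridge: a bridge with no cutvertex. -/
def IsIrreducibleBridge (l : List (ℤ × ℤ)) : Prop :=
  IsBridge l ∧ ∀ i, ¬ IsCutAt l i

/-- `irrBridgeCount n` is `a_n`, the number of irreducible bridges of length `n`, with `a_0 = 0`. -/
noncomputable def irrBridgeCount : ℕ → ℕ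
  | 0 => 0
  | n + 1 => {l : List (ℤ × ℤ) | IsIrreducibleBridge l ∧ l.length = n + 2}.ncard


section Aux

lemma getD_take' {α : Type*} {d : α} {l : List α} {k i : ℕ} (h : i < k) :
    (l.take k).getD i d = l.getD i d := by
  rw [List.getD_eq_getElem?_getD, List.getD_eq_getElem?_getD, List.getElem?_take, if_pos h]

lemma getD_drop' {α : Type*} {d : α} (l : List α) (k i : ℕ) :
    (l.drop k).getD i d = l.getD (k + i) d := by
  rw [List.getD_eq_getElem?_getD, List.getD_eq_getElem?_getD, List.getElem?_drop]

lemma getD_map' {α : Type*} {d : α} {l : List α} (f : α → α) {i : ℕ} (h : i < l.length) :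
    (l.map f).getD i d = f (l.getD i d) := by
  rw [List.getD_eq_getElem?_getD, List.getD_eq_getElem?_getD, List.getElem?_map,
    List.getElem?_eq_getElem h]
  simp [List.getD_eq_getElem l d h]

lemma getD_map_range {β : Type*} {d : β} (f : ℕ → β) {i n : ℕ} (h : i < n) :
    ((List.range n).map f).getD i d = f i := by
  rw [List.getD_eq_getElem?_getD, List.getElem?_map, List.getElem?_range h]
  rfl

lemma normMap_injective (p : ℤ × ℤ) : Function.Injective (normMap p) := by
  intro q r h
  unfold normMap at h
  split_ifs at h <;>
    (rcases q with ⟨a, b⟩; rcases r with ⟨c, d⟩;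
     simp only [Prod.mk.injEq] at h ⊢; omega)

lemma normMap_self (p : ℤ × ℤ) : normMap p p = 0 := by
  unfold normMap
  split_ifs <;> simp [Prod.ext_iff]

lemma normMap_taxiStep (p : ℤ × ℤ) {u v : ℤ × ℤ} (h : taxiStep u v) :
    taxiStep (normMap p u) (normMap p v) := by
  rcases p with ⟨a, b⟩
  rcases u with ⟨x, y⟩
  rcases h with ⟨he, rfl⟩ | ⟨ho, rfl⟩ | ⟨he, rfl⟩ | ⟨ho, rfl⟩ <;>
    (simp only [taxiStep, normMap, Int.even_iff, Int.odd_iff, Prod.mk.injEq] at * <;>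
     split_ifs <;> simp_all <;> omega)

lemma perp_normMap (p a b c d : ℤ × ℤ) :
    perp (normMap p a - normMap p b) (normMap p c - normMap p d) ↔ perp (a - b) (c - d) := by
  unfold perp normMap
  split_ifs <;>
    (simp only [Prod.fst_sub, Prod.snd_sub] <;>
     constructor <;> intro h <;> linear_combination h)

lemma turnAt_take {l : List (ℤ × ℤ)} {k i : ℕ} (h2 : i + 1 < k) :
    turnAt (l.take k) i ↔ turnAt l i := by
  unfold turnAt
  rw [getD_take' (by omega), getD_take' (by omega), getD_take' (by omega)]

lemma turnAt_dropMap {l : List (ℤ × ℤ)} {k i : ℕ} {p : ℤ × ℤ} (h1 : 1 ≤ i)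
    (h2 : k + i + 1 < l.length) :
    turnAt ((l.drop k).map (normMap p)) i ↔ turnAt l (k + i) := by
  unfold turnAt
  have hd : (l.drop k).length = l.length - k := List.length_drop
  rw [getD_map' (normMap p) (by omega), getD_map' (normMap p) (by omega),
    getD_map' (normMap p) (by omega), getD_drop', getD_drop', getD_drop']
  have e1 : k + (i - 1) = k + i - 1 := by omega
  have e2 : k + (i + 1) = k + i + 1 := by omega
  rw [e1, e2]
  exact perp_normMap p _ _ _ _

lemma take_mem_originWalks {l : List (ℤ × ℤ)} {n m : ℕ} (h : l ∈ originWalks (n + m)) :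
    l.take (n + 1) ∈ originWalks n := by
  obtain ⟨⟨hne, hnd, hstep, hturn⟩, hlen, h0⟩ := h
  have hlt : (l.take (n + 1)).length = n + 1 := by
    rw [List.length_take, hlen]; omega
  refine ⟨⟨?_, ?_, ?_, ?_⟩, hlt, ?_⟩
  · intro hnil; rw [hnil] at hlt; simp at hlt
  · exact hnd.sublist (List.take_sublist _ _)
  · intro i hi
    rw [hlt] at hi
    rw [getD_take' (by omega), getD_take' (by omega)]
    exact hstep i (by omega)
  · intro i h1 h2
    rw [hlt] at h2
    rw [turnAt_take (by omega), turnAt_take (by omega)]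
    exact hturn i h1 (by omega)
  · rw [getD_take' (by omega)]; exact h0

lemma dropMap_mem_originWalks {l : List (ℤ × ℤ)} {n m : ℕ} (h : l ∈ originWalks (n + m)) :
    (l.drop n).map (normMap (l.getD n 0)) ∈ originWalks m := by
  obtain ⟨⟨hne, hnd, hstep, hturn⟩, hlen, h0⟩ := h
  set p := l.getD n 0 with hp
  have hlt : ((l.drop n).map (normMap p)).length = m + 1 := by
    rw [List.length_map, List.length_drop, hlen]; omega
  have hdl : (l.drop n).length = m + 1 := by rw [List.length_drop, hlen]; omega
  refine ⟨⟨?_, ?_, ?_, ?_⟩, hlt, ?_⟩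
  · intro hnil; rw [hnil] at hlt; simp at hlt
  · exact List.Nodup.map (normMap_injective p) (hnd.sublist (List.drop_sublist _ _))
  · intro i hi
    rw [hlt] at hi
    rw [getD_map' (normMap p) (by omega), getD_map' (normMap p) (by omega),
      getD_drop', getD_drop']
    exact normMap_taxiStep p (hstep (n + i) (by omega))
  · intro i h1 h2
    rw [hlt] at h2
    rw [turnAt_dropMap h1 (by omega), turnAt_dropMap (by omega) (by omega)]
    have e : n + (i + 1) = (n + i) + 1 := by omega
    rw [e]
    exact hturn (n + i) (by omega) (by omega)
  · rw [getD_map' (normMap p) (by omega), getD_drop']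
    exact normMap_self p

lemma taxiStep_determined {u v w : ℤ × ℤ} (hv : taxiStep u v) (hw : taxiStep u w)
    (hiff : (v.2 = u.2) ↔ (w.2 = u.2)) : v = w := by
  rcases u with ⟨a, b⟩; rcases v with ⟨c, d⟩; rcases w with ⟨e, f⟩
  simp only [taxiStep, Int.even_iff, Int.odd_iff, Prod.mk.injEq] at hv hw
  simp only [Prod.mk.injEq]
  omega

lemma originWalks_finite (n : ℕ) : (originWalks n).Finite := by
  classical
  set F : List (ℤ × ℤ) → List Bool :=
    fun l => (List.range n).map fun i => decide ((l.getD (i + 1) 0).2 = (l.getD i 0).2) with hF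
  have himg : F '' originWalks n ⊆ {L : List Bool | L.length = n} := by
    rintro _ ⟨l, _, rfl⟩
    simp [hF]
  have hinj : Set.InjOn F (originWalks n) := by
    rintro l₁ ⟨⟨_, _, hstep₁, _⟩, hlen₁, h0₁⟩ l₂ ⟨⟨_, _, hstep₂, _⟩, hlen₂, h0₂⟩ hFeq
    have key : ∀ i, i ≤ n → l₁.getD i 0 = l₂.getD i 0 := by
      intro i
      induction i with
      | zero => intro _; rw [h0₁, h0₂]
      | succ i ih =>
        intro hi
        have e := ih (by omega)
        have s₁ := hstep₁ i (by omega)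
        have s₂ := hstep₂ i (by omega)
        have hb := congrArg (fun L => L.getD i false) hFeq
        simp only [hF] at hb
        rw [getD_map_range _ (show i < n by omega), getD_map_range _ (show i < n by omega)] at hb
        have hiff := decide_eq_decide.mp hb
        rw [e] at hiff s₁
        exact taxiStep_determined s₁ s₂ hiff
    apply List.ext_getElem (by rw [hlen₁, hlen₂])
    intro i hi₁ hi₂
    rw [← List.getD_eq_getElem l₁ 0 hi₁, ← List.getD_eq_getElem l₂ 0 hi₂]
    exact key i (by omega)
  exact Set.Finite.of_finite_image ((List.finite_length_eq Bool n).subset himg) hinj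

end Aux

/-- For all integers `n, m ≥ 1` the number of taxi walks satisfies
`c_{n+m} ≤ c_n · c_m`. -/
theorem taxiCount_submultiplicative (n m : ℕ) (hn : 1 ≤ n) (hm : 1 ≤ m) :
    taxiCount (n + m) ≤ taxiCount n * taxiCount m := by
  classical
  set F : List (ℤ × ℤ) → List (ℤ × ℤ) × List (ℤ × ℤ) :=
    fun l => (l.take (n + 1), (l.drop n).map (normMap (l.getD n 0))) with hF
  have hmaps : ∀ l ∈ originWalks (n + m), F l ∈ originWalks n ×ˢ originWalks m := by
    intro l hl
    exact ⟨take_mem_originWalks hl, dropMap_mem_originWalks hl⟩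
  have hinj : Set.InjOn F (originWalks (n + m)) := by
    intro l₁ hl₁ l₂ hl₂ heq
    simp only [hF, Prod.mk.injEq] at heq
    obtain ⟨h1, h2⟩ := heq
    have hlen₁ : l₁.length = n + m + 1 := hl₁.2.1
    have hlen₂ : l₂.length = n + m + 1 := hl₂.2.1
    have hp : l₁.getD n 0 = l₂.getD n 0 := by
      have := congrArg (fun L => L.getD n 0) h1
      simpa [getD_take' (show n < n + 1 by omega)] using this
    rw [hp] at h2
    have h2' : l₁.drop n = l₂.drop n :=
      List.map_injective_iff.mpr (normMap_injective _) h2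
    have h1' : l₁.take n = l₂.take n := by
      have := congrArg (fun L => L.take n) h1
      simpa [List.take_take] using this
    calc l₁ = l₁.take n ++ l₁.drop n := (List.take_append_drop n l₁).symm
      _ = l₂.take n ++ l₂.drop n := by rw [h1', h2']
      _ = l₂ := List.take_append_drop n l₂
  have hfin : (originWalks n ×ˢ originWalks m).Finite :=
    (originWalks_finite n).prod (originWalks_finite m)
  have hcard : (originWalks n ×ˢ originWalks m).ncard = taxiCount n * taxiCount m := by
    have h1 := Nat.card_congr (Equiv.Set.prod (originWalks n) (originWalks m))
    rw [Nat.card_prod] at h1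
    simp only [Nat.card_coe_set_eq] at h1
    exact h1
  calc taxiCount (n + m) = (originWalks (n + m)).ncard := rfl
    _ ≤ (originWalks n ×ˢ originWalks m).ncard :=
        Set.ncard_le_ncard_of_injOn F hmaps hinj hfin
    _ = taxiCount n * taxiCount m := hcard
end

section
/- The encoding map that sends a taxi walk of length n starting at the origin to the pair (a, σ) is injective, and for every taxi walk the turn-word σ contains no two consecutive occurrences of the letter t. -/
open Filter

section AuxEncode

lemma taxiStep_det {u v w : ℤ × ℤ} (hv : taxiStep u v) (hw : taxiStep u w)
    (h : (v.2 = u.2) ↔ (w.2 = u.2)) : v = w := by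
  simp only [taxiStep, Int.even_iff, Int.odd_iff] at hv hw
  rcases hv with ⟨h1,rfl⟩|⟨h1,rfl⟩|⟨h1,rfl⟩|⟨h1,rfl⟩ <;>
    rcases hw with ⟨h2,rfl⟩|⟨h2,rfl⟩|⟨h2,rfl⟩|⟨h2,rfl⟩ <;>
    simp_all [Prod.ext_iff] <;> omega

lemma perp_iff_aux {u v w : ℤ × ℤ} (hv : taxiStep u v) (hw : taxiStep v w) :
    perp (v - u) (w - v) ↔ ¬((v.2 = u.2) ↔ (w.2 = v.2)) := by
  simp only [taxiStep, Int.even_iff, Int.odd_iff] at hv hw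
  rcases hv with ⟨h1,rfl⟩|⟨h1,rfl⟩|⟨h1,rfl⟩|⟨h1,rfl⟩ <;>
    rcases hw with ⟨h2,rfl⟩|⟨h2,rfl⟩|⟨h2,rfl⟩|⟨h2,rfl⟩ <;>
    simp [perp, Prod.ext_iff] <;> omega

lemma taxiStep_zero {v : ℤ × ℤ} (h : taxiStep (0,0) v) : v = (1,0) ∨ v = (0,1) := by
  simp only [taxiStep, Int.even_iff, Int.odd_iff] at h
  rcases h with ⟨h1,rfl⟩|⟨h1,rfl⟩|⟨h1,rfl⟩|⟨h1,rfl⟩ <;> simp_all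

lemma turnWord_getD (l : List (ℤ × ℤ)) (i : ℕ) (h : i < l.length - 2) :
    (turnWord l).getD i false = decide (turnAt l (i + 1)) := by
  have hlen : i < (turnWord l).length := by simpa [turnWord] using h
  rw [List.getD_eq_getElem _ _ hlen]
  simp [turnWord]

end AuxEncode

/-- The encoding map sending a taxi walk of length `n` starting at the
origin to the pair `(a, σ)` is injective, and for every taxi walk starting at the origin the
turn-word `σ` contains no two consecutive occurrences of the letter `t` (here `t = true`). -/
theorem encode_injective_and_no_two_consecutive_turns :
    (∀ (n : ℕ) (l₁ l₂ : List (ℤ × ℤ)), l₁ ∈ originWalks n → l₂ ∈ originWalks n →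
      encode l₁ = encode l₂ → l₁ = l₂) ∧
    (∀ (n : ℕ) (l : List (ℤ × ℤ)), l ∈ originWalks n →
      ∀ i, i + 1 < (turnWord l).length →
        ¬((turnWord l).getD i false = true ∧ (turnWord l).getD (i + 1) false = true)) := by
  constructor
  · intro n l₁ l₂ h₁ h₂ henc
    obtain ⟨⟨-, -, hstep₁, -⟩, hlen₁, hz₁⟩ := h₁
    obtain ⟨⟨-, -, hstep₂, -⟩, hlen₂, hz₂⟩ := h₂
    have hfst : decide (l₁.getD 1 0 = (0,1)) = decide (l₂.getD 1 0 = (0,1)) :=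
      congrArg Prod.fst henc
    have hword : turnWord l₁ = turnWord l₂ := congrArg Prod.snd henc
    -- turn bits agree
    have hturn : ∀ j, j < n - 1 → (turnAt l₁ (j + 1) ↔ turnAt l₂ (j + 1)) := by
      intro j hj
      have h1 : j < l₁.length - 2 := by omega
      have h2 : j < l₂.length - 2 := by omega
      have : (turnWord l₁).getD j false = (turnWord l₂).getD j false :=
        congrArg (fun s => s.getD j false) hword
      rw [turnWord_getD _ _ h1, turnWord_getD _ _ h2] at this
      simpa using this
    have key : ∀ k, k ≤ n → l₁.getD k 0 = l₂.getD k 0 := by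
      intro k
      induction k using Nat.strong_induction_on with
      | _ k ih =>
        intro hk
        match k, hk with
        | 0, _ => rw [hz₁, hz₂]
        | 1, hk =>
          have hs₁ : taxiStep (l₁.getD 0 0) (l₁.getD 1 0) := hstep₁ 0 (by omega)
          have hs₂ : taxiStep (l₂.getD 0 0) (l₂.getD 1 0) := hstep₂ 0 (by omega)
          rw [hz₁] at hs₁; rw [hz₂] at hs₂
          rcases taxiStep_zero hs₁ with e₁ | e₁ <;>
            rcases taxiStep_zero hs₂ with e₂ | e₂ <;>
            simp_all
        | (j+2), hk =>
          have e0 : l₁.getD j 0 = l₂.getD j 0 := ih j (by omega) (by omega)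
          have e1 : l₁.getD (j+1) 0 = l₂.getD (j+1) 0 := ih (j+1) (by omega) (by omega)
          have ha₁ : taxiStep (l₁.getD j 0) (l₁.getD (j+1) 0) := hstep₁ j (by omega)
          have hb₁ : taxiStep (l₁.getD (j+1) 0) (l₁.getD (j+2) 0) := hstep₁ (j+1) (by omega)
          have ha₂ : taxiStep (l₂.getD j 0) (l₂.getD (j+1) 0) := hstep₂ j (by omega)
          have hb₂ : taxiStep (l₂.getD (j+1) 0) (l₂.getD (j+2) 0) := hstep₂ (j+1) (by omega)
          have ht := hturn j (by omega)
          have t₁ : turnAt l₁ (j+1) ↔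
              ¬(((l₁.getD (j+1) 0).2 = (l₁.getD j 0).2) ↔
                ((l₁.getD (j+2) 0).2 = (l₁.getD (j+1) 0).2)) := by
            unfold turnAt
            simpa using perp_iff_aux ha₁ hb₁
          have t₂ : turnAt l₂ (j+1) ↔
              ¬(((l₂.getD (j+1) 0).2 = (l₂.getD j 0).2) ↔
                ((l₂.getD (j+2) 0).2 = (l₂.getD (j+1) 0).2)) := by
            unfold turnAt
            simpa using perp_iff_aux ha₂ hb₂
          rw [e1] at hb₁
          refine taxiStep_det hb₁ hb₂ ?_
          rw [t₁, t₂, e0, e1] at ht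
          tauto
    apply List.ext_getElem (by omega)
    intro i hi₁ hi₂
    have := key i (by omega)
    rwa [List.getD_eq_getElem _ _ hi₁, List.getD_eq_getElem _ _ hi₂] at this
  · rintro n l ⟨⟨-, -, -, hns⟩, hlen, -⟩ i hi ⟨hti, hti1⟩
    have hl : (turnWord l).length = l.length - 2 := by simp [turnWord]
    have h1 : i < l.length - 2 := by omega
    have h2 : i + 1 < l.length - 2 := by omega
    rw [turnWord_getD _ _ h1] at hti
    rw [turnWord_getD _ _ h2] at hti1
    exact hns (i + 1) (by omega) (by omega) ⟨by simpa using hti, by simpa using hti1⟩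
end

section
/- Let v_0, …, v_n be a taxi walk that turns at v_i and at v_j, where 1 ≤ i < j ≤ n−1 and the walk goes straight at every vertex v_k with i < k < j. Then the two turns are in the same rotational direction (both left turns or both right turns) if and only if j − i is odd. -/
open Filter

/-- The turn of the walk `l` at its `i`-th vertex is a left turn: the outgoing step is the
incoming step rotated through `+π/2`. -/
def leftTurnAt (l : List (ℤ × ℤ)) (i : ℕ) : Prop :=
  l.getD (i + 1) 0 - l.getD i 0 =
    (-(l.getD i 0 - l.getD (i - 1) 0).2, (l.getD i 0 - l.getD (i - 1) 0).1)

private lemma step_cases (l : List (ℤ × ℤ)) (hl : IsTaxiWalk l) (k : ℕ)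
    (hk : k + 1 < l.length) :
    (l.getD (k+1) 0 - l.getD k 0 = ((1:ℤ), (0:ℤ)) ∧ Even (l.getD k 0).2) ∨
    (l.getD (k+1) 0 - l.getD k 0 = ((-1:ℤ), (0:ℤ)) ∧ Odd (l.getD k 0).2) ∨
    (l.getD (k+1) 0 - l.getD k 0 = ((0:ℤ), (1:ℤ)) ∧ Even (l.getD k 0).1) ∨
    (l.getD (k+1) 0 - l.getD k 0 = ((0:ℤ), (-1:ℤ)) ∧ Odd (l.getD k 0).1) := by
  have h := hl.2.2.1 k hk
  unfold taxiStep at h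
  rcases h with ⟨hp, he⟩ | ⟨hp, he⟩ | ⟨hp, he⟩ | ⟨hp, he⟩
  · exact Or.inl ⟨by rw [he]; simp [Prod.ext_iff], hp⟩
  · exact Or.inr (Or.inl ⟨by rw [he]; simp [Prod.ext_iff], hp⟩)
  · exact Or.inr (Or.inr (Or.inl ⟨by rw [he]; simp [Prod.ext_iff], hp⟩))
  · exact Or.inr (Or.inr (Or.inr ⟨by rw [he]; simp [Prod.ext_iff], hp⟩))

/-- If a taxi walk turns at `v_i` and at `v_j` (`1 ≤ i < j ≤ n − 1`) and goes
straight at every vertex strictly between them, then the two turns are in the same rotational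
direction if and only if `j − i` is odd. -/
theorem consecutive_turns_direction (l : List (ℤ × ℤ)) (i j : ℕ)
    (hl : IsTaxiWalk l) (hi : 1 ≤ i) (hij : i < j) (hj : j + 1 < l.length)
    (hti : turnAt l i) (htj : turnAt l j)
    (hstraight : ∀ k, i < k → k < j → ¬ turnAt l k) :
    ((leftTurnAt l i ↔ leftTurnAt l j) ↔ Odd (j - i)) := by
  obtain ⟨d, hd⟩ : ∃ d, l.getD (i+1) 0 - l.getD i 0 = d := ⟨_, rfl⟩
  have key : ∀ k, i ≤ k → k ≤ j →
      (l.getD k 0).1 = (l.getD i 0).1 + ((k:ℤ) - i) * d.1 ∧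
      (l.getD k 0).2 = (l.getD i 0).2 + ((k:ℤ) - i) * d.2 ∧
      (k < j → l.getD (k+1) 0 - l.getD k 0 = d) := by
    intro k hk
    induction k, hk using Nat.le_induction with
    | base => exact fun _ => ⟨by ring_nf, by ring_nf, fun _ => hd⟩
    | succ k hk ih =>
      intro hkj
      obtain ⟨hx, hy, hs⟩ := ih (by omega)
      have hsk : l.getD (k+1) 0 - l.getD k 0 = d := hs (by omega)
      have c1 : (l.getD (k+1) 0).1 - (l.getD k 0).1 = d.1 := by rw [← hsk]; rfl
      have c2 : (l.getD (k+1) 0).2 - (l.getD k 0).2 = d.2 := by rw [← hsk]; rfl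
      refine ⟨by push_cast; linear_combination hx + c1,
              by push_cast; linear_combination hy + c2, ?_⟩
      intro hj2
      have hns := hstraight (k+1) (by omega) hj2
      unfold turnAt at hns
      have hk1 : k + 1 - 1 = k := by omega
      rw [hk1, hsk] at hns
      have hsd := step_cases l hl k (by omega)
      rw [hsk] at hsd
      have hsd' := step_cases l hl (k+1) (by omega)
      rcases hsd with ⟨h1', hp⟩|⟨h1', hp⟩|⟨h1', hp⟩|⟨h1', hp⟩ <;>
        rcases hsd' with ⟨h2', hq⟩|⟨h2', hq⟩|⟨h2', hq⟩|⟨h2', hq⟩ <;>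
        subst h1' <;> rw [h2'] at hns ⊢ <;>
        simp only [perp, Prod.mk.injEq, Int.even_iff, Int.odd_iff] at hns hp hq c1 c2 ⊢ <;>
        omega
  -- perpendicular-step cases at i-1, i, j
  have hdc := step_cases l hl i (by omega)
  rw [hd] at hdc
  have hi1 : i - 1 + 1 = i := by omega
  have hec := step_cases l hl (i-1) (by omega)
  rw [hi1] at hec
  obtain ⟨e, he⟩ : ∃ e, l.getD i 0 - l.getD (i-1) 0 = e := ⟨_, rfl⟩
  rw [he] at hec
  have hfc := step_cases l hl j (by omega)
  obtain ⟨f, hf⟩ : ∃ f, l.getD (j+1) 0 - l.getD j 0 = f := ⟨_, rfl⟩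
  rw [hf] at hfc
  obtain ⟨px, py, -⟩ := key j (le_of_lt hij) le_rfl
  obtain ⟨-, -, hs⟩ := key (j-1) (by omega) (by omega)
  have hj1 : j - 1 + 1 = j := by omega
  rw [hj1] at hs
  have hsj : l.getD j 0 - l.getD (j-1) 0 = d := hs (by omega)
  unfold turnAt at hti htj
  rw [he, hd] at hti
  rw [hsj, hf] at htj
  have ce1 : (l.getD i 0).1 - (l.getD (i-1) 0).1 = e.1 := by rw [← he]; rfl
  have ce2 : (l.getD i 0).2 - (l.getD (i-1) 0).2 = e.2 := by rw [← he]; rfl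
  unfold leftTurnAt
  rw [hd, he, hf, hsj]
  rcases hdc with ⟨h1', hp⟩|⟨h1', hp⟩|⟨h1', hp⟩|⟨h1', hp⟩ <;>
    rcases hec with ⟨h2', hq⟩|⟨h2', hq⟩|⟨h2', hq⟩|⟨h2', hq⟩ <;>
    rcases hfc with ⟨h3', hr⟩|⟨h3', hr⟩|⟨h3', hr⟩|⟨h3', hr⟩ <;>
    subst h1' <;> subst h2' <;> subst h3' <;>
    simp only [perp, Prod.mk.injEq, Int.even_iff, Int.odd_iff, Nat.odd_iff, neg_zero, neg_neg,
      mul_one, mul_zero, mul_neg, and_true, true_and, and_false, false_and, iff_true, true_iff,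
      iff_false, false_iff] at hti htj hp hq hr px py ce1 ce2 ⊢ <;>
    omega
end

section
/- Every closed taxi walk has length divisible by 4. -/
open Filter

/-- The cyclic walk `l` (indices mod `l.length`) turns at its `i`-th vertex. -/
def cycTurnAt (l : List (ℤ × ℤ)) (i : ℕ) : Prop :=
  perp (l.getD i 0 - l.getD ((i + l.length - 1) % l.length) 0)
    (l.getD ((i + 1) % l.length) 0 - l.getD i 0)

/-- A closed taxi walk: a cyclic sequence of distinct vertices, each consecutive pair (indices
taken modulo the length) an oriented edge of the Manhattan lattice, with no two cyclically
consecutive turns. -/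
def IsClosedTaxiWalk (l : List (ℤ × ℤ)) : Prop :=
  l ≠ [] ∧ l.Nodup ∧
  (∀ i, i < l.length → taxiStep (l.getD i 0) (l.getD ((i + 1) % l.length) 0)) ∧
  (∀ i, i < l.length → ¬(cycTurnAt l i ∧ cycTurnAt l ((i + 1) % l.length)))

/-- The potential `x + y + 2xy` modulo 4, which increases by 1 along every oriented edge. -/
def taxiPhi (p : ℤ × ℤ) : ZMod 4 := (p.1 : ZMod 4) + (p.2 : ZMod 4) + 2 * p.1 * p.2

lemma taxiPhi_step {u v : ℤ × ℤ} (h : taxiStep u v) : taxiPhi v = taxiPhi u + 1 := by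
  have h4 : (4 : ZMod 4) = 0 := by decide
  rcases h with ⟨⟨k, hk⟩, rfl⟩ | ⟨⟨k, hk⟩, rfl⟩ | ⟨⟨k, hk⟩, rfl⟩ | ⟨⟨k, hk⟩, rfl⟩ <;>
    simp only [taxiPhi] <;> rw [hk] <;> push_cast
  · linear_combination (k : ZMod 4) * h4
  · linear_combination (-(k : ZMod 4) - 1) * h4
  · linear_combination (k : ZMod 4) * h4
  · linear_combination (-(k : ZMod 4) - 1) * h4

/-- Every closed taxi walk has length divisible by `4`. -/
theorem closedTaxiWalk_length_dvd_four (l : List (ℤ × ℤ)) (hl : IsClosedTaxiWalk l) :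
    4 ∣ l.length := by
  obtain ⟨hne, -, hstep, -⟩ := hl
  set n := l.length with hn
  have hnpos : 0 < n := List.length_pos_iff.mpr hne
  have key : ∀ i, i ≤ n →
      taxiPhi (l.getD (i % n) 0) = taxiPhi (l.getD 0 0) + (i : ZMod 4) := by
    intro i
    induction i with
    | zero => intro _; simp [Nat.zero_mod]
    | succ i ih =>
      intro hi
      have hilt : i < n := hi
      have := taxiPhi_step (hstep i hilt)
      rw [Nat.mod_eq_of_lt hilt] at ih
      have ih' := ih (le_of_lt hilt)
      calc taxiPhi (l.getD ((i + 1) % n) 0) = taxiPhi (l.getD i 0) + 1 := this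
      _ = taxiPhi (l.getD 0 0) + (i : ZMod 4) + 1 := by rw [ih']
      _ = taxiPhi (l.getD 0 0) + ((i + 1 : ℕ) : ZMod 4) := by push_cast; ring
  have hend := key n le_rfl
  rw [Nat.mod_self] at hend
  have hz : (n : ZMod 4) = 0 := left_eq_add.mp hend
  exact (ZMod.natCast_eq_zero_iff n 4).mp hz
end

section
/- For all integers n, m ≥ 0, the number of bridges satisfies b_{n+m} ≥ b_n · b_m. -/
open Filter

/-! ### Auxiliary machinery for the supermultiplicativity proof -/

/-- Inverse of `normMap p`. -/
def invNorm (p q : ℤ × ℤ) : ℤ × ℤ :=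
  (p.1 + (if Even p.2 then q.1 else -q.1), p.2 + (if Even p.1 then q.2 else -q.2))

lemma normMap_invNorm (p q : ℤ × ℤ) : normMap p (invNorm p q) = q := by
  unfold normMap invNorm
  by_cases h1 : Even p.1 <;> by_cases h2 : Even p.2 <;>
    simp [h1, h2, Prod.ext_iff]

lemma invNorm_injective (p : ℤ × ℤ) : Function.Injective (invNorm p) := by
  intro a b h
  have := congrArg (normMap p) h
  rwa [normMap_invNorm, normMap_invNorm] at this

lemma invNorm_zero (p : ℤ × ℤ) : invNorm p (0, 0) = p := by
  unfold invNorm; by_cases h1 : Even p.1 <;> by_cases h2 : Even p.2 <;> simp [h1, h2]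

lemma invNorm_fst (p q : ℤ × ℤ) (hp : Even p.2) : (invNorm p q).1 = p.1 + q.1 := by
  simp [invNorm, hp]

set_option maxHeartbeats 1000000 in
lemma taxiStep_invNorm (p u w : ℤ × ℤ) (hp : Even p.2) (h : taxiStep u w) :
    taxiStep (invNorm p u) (invNorm p w) := by
  have hp' : p.2 % 2 = 0 := Int.even_iff.mp hp
  by_cases h1 : Even p.1 <;>
    [have h1' : p.1 % 2 = 0 := Int.even_iff.mp h1;
     have h1' : p.1 % 2 = 1 := Int.odd_iff.mp (Int.not_even_iff_odd.mp h1)] <;>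
  rcases h with ⟨hu, hw⟩ | ⟨hu, hw⟩ | ⟨hu, hw⟩ | ⟨hu, hw⟩ <;> subst hw <;>
    simp only [Int.even_iff, Int.odd_iff] at hu <;>
    simp only [taxiStep, invNorm, h1, hp, if_true, if_false] <;>
    simp only [Prod.ext_iff, Int.even_iff, Int.odd_iff, and_true, true_and] <;> omega

lemma invNorm_sub (p a b : ℤ × ℤ) :
    invNorm p a - invNorm p b =
      ((if Even p.2 then a.1 - b.1 else -(a.1 - b.1)),
        (if Even p.1 then a.2 - b.2 else -(a.2 - b.2))) := by
  unfold invNorm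
  by_cases h1 : Even p.1 <;> by_cases h2 : Even p.2 <;>
    simp [h1, h2, Prod.ext_iff] <;> ring_nf <;> simp [sub_eq_add_neg] <;> ring

lemma perp_invNorm (p a b c d : ℤ × ℤ) :
    perp (invNorm p a - invNorm p b) (invNorm p c - invNorm p d) ↔ perp (a - b) (c - d) := by
  rw [invNorm_sub, invNorm_sub]
  unfold perp
  by_cases h1 : Even p.1 <;> by_cases h2 : Even p.2 <;>
    simp [h1, h2, Prod.ext_iff, neg_mul_neg] <;>
    constructor <;> intro h <;> linarith [h]

/-- Concatenation of two bridges: append the second one, renormalized to start at the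
endpoint of the first. -/
def glue (l r : List (ℤ × ℤ)) : List (ℤ × ℤ) :=
  l ++ (r.tail.map (invNorm (l.getD (l.length - 1) 0)))

lemma glue_length (l r : List (ℤ × ℤ)) : (glue l r).length = l.length + (r.length - 1) := by
  simp [glue]

lemma glue_getD_left (l r : List (ℤ × ℤ)) (i : ℕ) (hi : i < l.length) :
    (glue l r).getD i 0 = l.getD i 0 :=
  List.getD_append _ _ _ _ hi

lemma glue_getD_right (l r : List (ℤ × ℤ)) (hl : l ≠ []) (hr0 : r.getD 0 0 = (0, 0))
    (j : ℕ) (hj : j < r.length) :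
    (glue l r).getD (l.length - 1 + j) 0
      = invNorm (l.getD (l.length - 1) 0) (r.getD j 0) := by
  have hlpos : 0 < l.length := List.length_pos_iff.mpr hl
  cases j with
  | zero =>
      rw [Nat.add_zero, glue, List.getD_append _ _ _ _ (by omega), hr0, invNorm_zero]
  | succ k =>
      have hlen : l.length - 1 + (k + 1) = l.length + k := by omega
      have hk : k < r.tail.length := by rw [List.length_tail]; omega
      have hk' : k < (r.tail.map (invNorm (l.getD (l.length - 1) 0))).length := by
        simpa using hk
      rw [hlen, glue, List.getD_append_right _ _ _ _ (by omega), Nat.add_sub_cancel_left,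
        List.getD_eq_getElem _ _ hk', List.getElem_map, List.getElem_tail,
        ← List.getD_eq_getElem]

lemma bridge_last {l : List (ℤ × ℤ)} (hl : IsBridge l) :
    Even ((l.getD (l.length - 1) 0).2) ∧
    l.getD (l.length - 2) 0
      = ((l.getD (l.length - 1) 0).1 - 1, (l.getD (l.length - 1) 0).2) := by
  obtain ⟨⟨hne, hnd, hstep, hturn⟩, h2, h0, h1, hx, hy, hmax⟩ := hl
  have hs := hstep (l.length - 2) (by omega)
  have hidx : l.length - 2 + 1 = l.length - 1 := by omega
  rw [hidx] at hs
  set u := l.getD (l.length - 2) 0 with hu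
  set v := l.getD (l.length - 1) 0 with hv
  have hmx : u.1 ≤ v.1 := hmax (l.length - 2) (by omega)
  rcases hs with ⟨he, hw⟩ | ⟨he, hw⟩ | ⟨he, hw⟩ | ⟨he, hw⟩ <;> rw [Prod.ext_iff] at hw
  · exact ⟨hw.2 ▸ he, by rw [Prod.ext_iff]; simp at hw ⊢; omega⟩
  · simp at hw; omega
  · simp at hw; omega
  · simp at hw; omega

set_option maxHeartbeats 2000000 in
lemma glue_isBridge {l r : List (ℤ × ℤ)} (hl : IsBridge l) (hr : IsBridge r) :
    IsBridge (glue l r) := by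
  obtain ⟨hv2, hvprev⟩ := bridge_last hl
  obtain ⟨⟨hlne, hlnd, hlstep, hlturn⟩, hl2, hl0, hl1, hlx, hly, hlmax⟩ := hl
  obtain ⟨⟨hrne, hrnd, hrstep, hrturn⟩, hr2, hr0, hr1, hrx, hry, hrmax⟩ := hr
  set L := l.length with hLdef
  set R := r.length with hRdef
  set v := l.getD (L - 1) 0 with hvdef
  set c := glue l r with hcdef
  have hC : c.length = L + R - 1 := by rw [hcdef, glue_length]; omega
  have hv1 : 1 ≤ v.1 := hlx (L - 1) (by omega) (by omega)
  have hcl : ∀ i < L, c.getD i 0 = l.getD i 0 := fun i hi => glue_getD_left l r i hi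
  have hcr : ∀ j < R, c.getD (L - 1 + j) 0 = invNorm v (r.getD j 0) := fun j hj =>
    glue_getD_right l r hlne hr0 j hj
  have hcr' : ∀ i, L - 1 ≤ i → i < L + R - 1 → c.getD i 0 = invNorm v (r.getD (i - (L - 1)) 0) := by
    intro i hi1 hi2
    have : i = L - 1 + (i - (L - 1)) := by omega
    rw [this, hcr _ (by omega)]
    congr 2
    omega
  -- steps of c
  have hcstep : ∀ i, i + 1 < c.length → taxiStep (c.getD i 0) (c.getD (i + 1) 0) := by
    intro i hi
    rw [hC] at hi
    by_cases hcase : i + 1 < L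
    · rw [hcl i (by omega), hcl (i + 1) hcase]
      exact hlstep i hcase
    · rw [hcr' i (by omega) (by omega), hcr' (i + 1) (by omega) (by omega)]
      have hidx : (i + 1) - (L - 1) = (i - (L - 1)) + 1 := by omega
      rw [hidx]
      exact taxiStep_invNorm v _ _ hv2 (hrstep (i - (L - 1)) (by omega))
  -- turn transfer
  have hturnL : ∀ i, 1 ≤ i → i + 1 < L → (turnAt c i ↔ turnAt l i) := by
    intro i h1 h2
    unfold turnAt
    rw [hcl i (by omega), hcl (i - 1) (by omega), hcl (i + 1) h2]
  have hturnR : ∀ i, L ≤ i → i + 1 < L + R - 1 → (turnAt c i ↔ turnAt r (i - (L - 1))) := by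
    intro i h1 h2
    unfold turnAt
    rw [hcr' i (by omega) (by omega), hcr' (i - 1) (by omega) (by omega),
      hcr' (i + 1) (by omega) (by omega)]
    have e1 : i - 1 - (L - 1) = (i - (L - 1)) - 1 := by omega
    have e2 : i + 1 - (L - 1) = (i - (L - 1)) + 1 := by omega
    rw [e1, e2, perp_invNorm]
  have hturnN : ¬ turnAt c (L - 1) := by
    unfold turnAt
    have e1 : L - 1 - 1 = L - 2 := by omega
    have e3 : c.getD (L - 1 + 1) 0 = invNorm v (r.getD 1 0) := hcr 1 (by omega)
    rw [e1, e3, hr1, hcl (L - 1) (by omega), hcl (L - 2) (by omega), hvprev, ← hvdef]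
    unfold perp invNorm
    by_cases h1 : Even v.1 <;> simp [h1, hv2] <;> ring_nf <;> omega
  -- nodup
  have hmeml : ∀ a ∈ l, a.1 ≤ v.1 := by
    intro a ha
    obtain ⟨i, hi, rfl⟩ := List.mem_iff_getElem.mp ha
    rw [← List.getD_eq_getElem _ 0 hi]
    exact hlmax i hi
  have hmemr : ∀ a ∈ r.tail.map (invNorm v), v.1 + 1 ≤ a.1 := by
    intro a ha
    obtain ⟨b, hb, rfl⟩ := List.mem_map.mp ha
    obtain ⟨k, hk, rfl⟩ := List.mem_iff_getElem.mp hb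
    rw [invNorm_fst _ _ hv2, List.getElem_tail]
    have hk' : k + 1 < R := by have := @List.length_tail _ r; omega
    have := hrx (k + 1) (by omega) hk'
    rw [List.getD_eq_getElem _ 0 hk'] at this
    omega
  have hcnd : c.Nodup := by
    rw [hcdef, glue, List.nodup_append]
    refine ⟨hlnd, List.Nodup.map (invNorm_injective v) (hrnd.sublist (List.tail_sublist r)), ?_⟩
    intro a ha b ha' hab
    subst hab
    have := hmeml a ha
    have := hmemr a ha'
    omega
  -- no double turns
  have hcturn : ∀ i, 1 ≤ i → i + 2 < c.length → ¬(turnAt c i ∧ turnAt c (i + 1)) := by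
    intro i h1 h2 ⟨t1, t2⟩
    rw [hC] at h2
    by_cases hA : i + 2 < L
    · exact hlturn i h1 hA ⟨(hturnL i h1 (by omega)).mp t1, (hturnL (i + 1) (by omega) (by omega)).mp t2⟩
    · by_cases hB : i < L
      · have : i = L - 2 ∨ i = L - 1 := by omega
        rcases this with hE | hE
        · exact hturnN (by rwa [show L - 1 = i + 1 by omega])
        · exact hturnN (by rwa [hE] at t1)
      · have hi1 : L ≤ i := by omega
        have hq1 := (hturnR i hi1 (by omega)).mp t1
        have hq2 := (hturnR (i + 1) (by omega) (by omega)).mp t2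
        have e2 : i + 1 - (L - 1) = (i - (L - 1)) + 1 := by omega
        rw [e2] at hq2
        exact hrturn (i - (L - 1)) (by omega) (by omega) ⟨hq1, hq2⟩
  -- assemble
  have hcne : c ≠ [] := by
    rw [hcdef, glue]
    simp [hlne]
  refine ⟨⟨hcne, hcnd, hcstep, hcturn⟩, by omega, ?_, ?_, ?_, ?_, ?_⟩
  · rw [hcl 0 (by omega)]; exact hl0
  · rw [hcl 1 (by omega)]; exact hl1
  · intro i h1 h2
    rw [hC] at h2
    by_cases hcase : i < L
    · rw [hcl i hcase]; exact hlx i h1 hcase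
    · rw [hcr' i (by omega) (by omega), invNorm_fst _ _ hv2]
      have := hrx (i - (L - 1)) (by omega) (by omega)
      omega
  · have e1 : c.length - 1 = L - 1 + (R - 1) := by omega
    have e2 : c.length - 2 = L - 1 + (R - 2) := by omega
    rw [e1, e2, hcr (R - 1) (by omega), hcr (R - 2) (by omega)]
    have := hry
    unfold invNorm
    by_cases h1 : Even v.1 <;> simp only [h1, hv2, if_true, if_false] <;> omega
  · intro i hi
    rw [hC] at hi
    have e1 : c.length - 1 = L - 1 + (R - 1) := by omega
    rw [e1, hcr (R - 1) (by omega), invNorm_fst _ _ hv2]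
    have hlast1 : 1 ≤ (r.getD (R - 1) 0).1 := hrx (R - 1) (by omega) (by omega)
    by_cases hcase : i < L
    · rw [hcl i hcase]
      have := hlmax i hcase
      omega
    · rw [hcr' i (by omega) (by omega), invNorm_fst _ _ hv2]
      have := hrmax (i - (L - 1)) (by omega)
      omega

lemma taxiStep_cases {u w : ℤ × ℤ} (h : taxiStep u w) :
    (w.1 = u.1 + 1 ∨ w.1 = u.1 - 1 ∨ w.1 = u.1) ∧
    (w.2 = u.2 + 1 ∨ w.2 = u.2 - 1 ∨ w.2 = u.2) := by
  rcases h with ⟨_, hw⟩ | ⟨_, hw⟩ | ⟨_, hw⟩ | ⟨_, hw⟩ <;> subst hw <;> simp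

lemma walk_bound {l : List (ℤ × ℤ)} (h0 : l.getD 0 0 = (0, 0))
    (hstep : ∀ i, i + 1 < l.length → taxiStep (l.getD i 0) (l.getD (i + 1) 0)) :
    ∀ i < l.length, -(i : ℤ) ≤ (l.getD i 0).1 ∧ (l.getD i 0).1 ≤ (i : ℤ) ∧
      -(i : ℤ) ≤ (l.getD i 0).2 ∧ (l.getD i 0).2 ≤ (i : ℤ) := by
  intro i
  induction i with
  | zero => intro _; rw [h0]; simp
  | succ k ih =>
      intro hk
      have hb := ih (by omega)
      have hs := taxiStep_cases (hstep k hk)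
      push_cast
      omega

lemma finite_fixed_length {s : Set (ℤ × ℤ)} (hs : s.Finite) (L : ℕ) :
    {l : List (ℤ × ℤ) | l.length = L ∧ ∀ x ∈ l, x ∈ s}.Finite := by
  have : Finite s := hs.to_subtype
  have h2 : {l : List s | l.length = L}.Finite := List.finite_length_eq _ L
  refine (h2.image (List.map Subtype.val)).subset ?_
  rintro l ⟨hlen, hmem⟩
  refine ⟨l.pmap (fun x hx => (⟨x, hx⟩ : s)) hmem, by simpa using hlen, ?_⟩
  rw [List.map_pmap]
  simp

lemma bridgeSet_finite (k : ℕ) : {l : List (ℤ × ℤ) | IsBridge l ∧ l.length = k}.Finite := by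
  refine (finite_fixed_length (Set.finite_Icc ((-(k : ℤ), -(k : ℤ))) (((k : ℤ), (k : ℤ)))) k).subset ?_
  rintro l ⟨hb, hlen⟩
  obtain ⟨⟨hne, hnd, hstep, hturn⟩, h2, h0, h1, hx, hy, hmax⟩ := hb
  refine ⟨hlen, ?_⟩
  intro x hxmem
  obtain ⟨i, hi, rfl⟩ := List.mem_iff_getElem.mp hxmem
  rw [← List.getD_eq_getElem _ 0 hi]
  have hbd := walk_bound h0 hstep i hi
  have hik : (i : ℤ) ≤ (k : ℤ) := by exact_mod_cast by omega
  rw [Set.mem_Icc]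
  constructor <;> rw [Prod.le_def] <;> constructor <;> dsimp only <;> omega

lemma glue_inj {l r l' r' : List (ℤ × ℤ)}
    (hr2 : 2 ≤ r.length) (hr0 : r.getD 0 0 = (0, 0)) (hr0' : r'.getD 0 0 = (0, 0))
    (hlen : l.length = l'.length) (hll : l.length = l.length)
    (h : glue l r = glue l' r') (hl : l = l') : r = r' := by
  subst hl
  have h2 : r.tail.map (invNorm (l.getD (l.length - 1) 0))
      = r'.tail.map (invNorm (l.getD (l.length - 1) 0)) := by
    have := congrArg (List.drop l.length) h
    rwa [glue, glue, List.drop_left' rfl, List.drop_left' rfl] at this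
  have h3 : r.tail = r'.tail :=
    (List.map_injective_iff.mpr (invNorm_injective _)) h2
  cases r with
  | nil => simp at hr2
  | cons a t =>
    cases r' with
    | nil =>
        simp at h3
        subst h3
        simp at hr2
    | cons a' t' =>
        simp at h3 hr0 hr0'
        rw [h3, hr0, hr0']

/-- For all integers `n, m ≥ 0` the number of bridges satisfies
`b_{n+m} ≥ b_n · b_m`. -/
theorem bridgeCount_supermultiplicative (n m : ℕ) :
    bridgeCount n * bridgeCount m ≤ bridgeCount (n + m) := by
  match n, m with
  | 0, m => simp [bridgeCount]
  | n + 1, 0 => simp [bridgeCount]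
  | a + 1, b + 1 =>
    have hidx : a + 1 + (b + 1) = (a + b + 1) + 1 := by omega
    rw [hidx]
    show {l : List (ℤ × ℤ) | IsBridge l ∧ l.length = a + 2}.ncard *
        {l : List (ℤ × ℤ) | IsBridge l ∧ l.length = b + 2}.ncard ≤
        {l : List (ℤ × ℤ) | IsBridge l ∧ l.length = a + b + 1 + 2}.ncard
    have hA := bridgeSet_finite (a + 2)
    have hB := bridgeSet_finite (b + 2)
    have hC := bridgeSet_finite (a + b + 1 + 2)
    rw [Set.ncard_eq_toFinset_card _ hA, Set.ncard_eq_toFinset_card _ hB,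
      Set.ncard_eq_toFinset_card _ hC, ← Finset.card_product]
    refine Finset.card_le_card_of_injOn (fun p => glue p.1 p.2) ?_ ?_
    · rintro ⟨l, r⟩ hp
      rw [Finset.mem_coe, Finset.mem_product, Set.Finite.mem_toFinset, Set.Finite.mem_toFinset] at hp
      obtain ⟨⟨hlb, hll⟩, hrb, hrl⟩ := hp
      rw [Finset.mem_coe, Set.Finite.mem_toFinset]
      refine ⟨glue_isBridge hlb hrb, ?_⟩
      rw [glue_length, hll, hrl]
      omega
    · rintro ⟨l, r⟩ hp ⟨l', r'⟩ hq h
      simp only [Finset.coe_product, Set.mem_prod, Set.Finite.coe_toFinset, Set.mem_setOf_eq] at hp hq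
      obtain ⟨⟨hlb, hll⟩, hrb, hrl⟩ := hp
      obtain ⟨⟨hlb', hll'⟩, hrb', hrl'⟩ := hq
      simp only at h
      have hltake : l = l' := by
        have h1 := congrArg (List.take (a + 2)) h
        rwa [glue, glue, List.take_left' hll, List.take_left' hll'] at h1
      have hrtail : r = r' :=
        glue_inj hrb.2.1 hrb.2.2.1 hrb'.2.2.1 (by rw [hll, hll']) rfl h hltake
      rw [Prod.ext_iff]
      exact ⟨hltake, hrtail⟩
end

section
/- As an identity of formal power series, B(x)·(1 − A(x)) = 1, where B(x) = Σ_{k≥0} b_k x^k and A(x) = Σ_{ℓ≥1} a_ℓ x^ℓ; equivalently B(x) = 1/(1 − A(x)). -/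
open Filter

namespace TaxiGF

lemma getD_lt {l : List (ℤ × ℤ)} {i : ℕ} (h : i < l.length) :
    l.getD i 0 = l[i] := List.getD_eq_getElem l 0 h

lemma getD_take {l : List (ℤ × ℤ)} {n i : ℕ} (h : i < n) :
    (l.take n).getD i 0 = l.getD i 0 := by
  simp [List.getD_eq_getElem?_getD, List.getElem?_take, h]

lemma getD_drop {l : List (ℤ × ℤ)} {n i : ℕ} :
    (l.drop n).getD i 0 = l.getD (n + i) 0 := by
  simp [List.getD_eq_getElem?_getD, List.getElem?_drop]

lemma getD_map' {f : ℤ × ℤ → ℤ × ℤ} {l : List (ℤ × ℤ)} {i : ℕ} (h : i < l.length) :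
    (l.map f).getD i 0 = f (l.getD i 0) := by
  rw [getD_lt (by simpa using h), getD_lt h, List.getElem_map]

def sgn (p : ℤ × ℤ) : ℤ := if Even p.1 then 1 else -1

lemma sgn_eq_or (p : ℤ × ℤ) : sgn p = 1 ∨ sgn p = -1 := by
  unfold sgn; split <;> simp

def smap (p q : ℤ × ℤ) : ℤ × ℤ := (q.1 - p.1, sgn p * (q.2 - p.2))

def imap (p q : ℤ × ℤ) : ℤ × ℤ := (q.1 + p.1, sgn p * q.2 + p.2)


lemma smap_fst (p q : ℤ × ℤ) : (smap p q).1 = q.1 - p.1 := rfl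
lemma imap_fst (p q : ℤ × ℤ) : (imap p q).1 = q.1 + p.1 := rfl

lemma smap_imap (p q : ℤ × ℤ) : smap p (imap p q) = q := by
  rcases sgn_eq_or p with h | h <;> simp [smap, imap, h] <;> ring

lemma imap_smap (p q : ℤ × ℤ) : imap p (smap p q) = q := by
  rcases sgn_eq_or p with h | h <;> simp [smap, imap, h] <;> ring

lemma smap_self (p : ℤ × ℤ) : smap p p = (0, 0) := by simp [smap]

lemma imap_zero (p : ℤ × ℤ) : imap p (0, 0) = p := by simp [imap]

lemma smap_injective (p : ℤ × ℤ) : Function.Injective (smap p) := by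
  intro a b h
  have : imap p (smap p a) = imap p (smap p b) := by rw [h]
  rwa [imap_smap, imap_smap] at this

lemma imap_injective (p : ℤ × ℤ) : Function.Injective (imap p) := by
  intro a b h
  have : smap p (imap p a) = smap p (imap p b) := by rw [h]
  rwa [smap_imap, smap_imap] at this

lemma normMap_eq_smap {p : ℤ × ℤ} (hp : Even p.2) : normMap p = smap p := by
  funext q
  by_cases h : Even p.1 <;> simp [normMap, smap, sgn, h, hp, Int.not_odd_iff_even.mpr hp] <;> ring

lemma taxiStep_smap {p : ℤ × ℤ} (hp : Even p.2) {u v : ℤ × ℤ} (h : taxiStep u v) :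
    taxiStep (smap p u) (smap p v) := by
  have hp1 : Even p.1 ∨ ¬ Even p.1 := em _
  rcases hp1 with h1 | h1 <;>
  · simp only [smap, sgn, h1, if_true, if_false, one_mul, neg_one_mul]
    rcases h with ⟨he, rfl⟩ | ⟨he, rfl⟩ | ⟨he, rfl⟩ | ⟨he, rfl⟩ <;>
      simp [taxiStep, Prod.ext_iff, Int.even_iff, Int.odd_iff] at * <;>
      omega

lemma taxiStep_imap {p : ℤ × ℤ} (hp : Even p.2) {u v : ℤ × ℤ} (h : taxiStep u v) :
    taxiStep (imap p u) (imap p v) := by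
  have hp1 : Even p.1 ∨ ¬ Even p.1 := em _
  rcases hp1 with h1 | h1 <;>
  · simp only [imap, sgn, h1, if_true, if_false, one_mul, neg_one_mul]
    rcases h with ⟨he, rfl⟩ | ⟨he, rfl⟩ | ⟨he, rfl⟩ | ⟨he, rfl⟩ <;>
      simp [taxiStep, Prod.ext_iff, Int.even_iff, Int.odd_iff] at * <;>
      omega

lemma perp_smap (p : ℤ × ℤ) (a b c d : ℤ × ℤ) :
    perp (smap p a - smap p b) (smap p c - smap p d) ↔ perp (a - b) (c - d) := by
  rcases sgn_eq_or p with h | h <;>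
    (simp only [perp, smap, h, Prod.fst_sub, Prod.snd_sub]; constructor <;> intro hh <;> nlinarith [hh])

lemma perp_imap (p : ℤ × ℤ) (a b c d : ℤ × ℤ) :
    perp (imap p a - imap p b) (imap p c - imap p d) ↔ perp (a - b) (c - d) := by
  rcases sgn_eq_or p with h | h <;>
    (simp only [perp, imap, h, Prod.fst_sub, Prod.snd_sub]; constructor <;> intro hh <;> nlinarith [hh])

/-! ### walk lemmas -/

lemma turnAt_take {l : List (ℤ × ℤ)} {n i : ℕ} (h : i + 1 < n) :
    turnAt (l.take n) i ↔ turnAt l i := by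
  unfold turnAt
  rw [getD_take (by omega), getD_take (by omega), getD_take (by omega)]

lemma turnAt_drop {l : List (ℤ × ℤ)} {n i : ℕ} (hi : 1 ≤ i) :
    turnAt (l.drop n) i ↔ turnAt l (n + i) := by
  unfold turnAt
  have e1 : n + i - 1 = n + (i - 1) := by omega
  have e2 : n + i + 1 = n + (i + 1) := by omega
  rw [getD_drop, getD_drop, getD_drop, e1, e2]

lemma turnAt_map {f : ℤ × ℤ → ℤ × ℤ}
    (hperp : ∀ a b c d, perp (f a - f b) (f c - f d) ↔ perp (a - b) (c - d))
    {l : List (ℤ × ℤ)} {i : ℕ} (hi : 1 ≤ i) (h : i + 1 < l.length) :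
    turnAt (l.map f) i ↔ turnAt l i := by
  unfold turnAt
  rw [getD_map' (by omega), getD_map' (by omega), getD_map' (by omega)]
  exact hperp _ _ _ _

lemma walk_take {l : List (ℤ × ℤ)} (h : IsTaxiWalk l) {n : ℕ} (hn : 1 ≤ n) :
    IsTaxiWalk (l.take n) := by
  obtain ⟨hne, hnd, hstep, hturn⟩ := h
  have hlen : 1 ≤ l.length := List.length_pos_iff.mpr hne
  refine ⟨?_, (List.take_sublist n l).nodup hnd, ?_, ?_⟩
  · have : 0 < (l.take n).length := by rw [List.length_take]; omega
    exact List.ne_nil_of_length_pos this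
  · intro i hi
    rw [List.length_take] at hi
    rw [getD_take (by omega), getD_take (by omega)]
    exact hstep i (by omega)
  · intro i h1 h2
    rw [List.length_take] at h2
    rw [turnAt_take (by omega), turnAt_take (by omega)]
    exact hturn i h1 (by omega)

lemma walk_drop {l : List (ℤ × ℤ)} (h : IsTaxiWalk l) {n : ℕ} (hn : n < l.length) :
    IsTaxiWalk (l.drop n) := by
  obtain ⟨hne, hnd, hstep, hturn⟩ := h
  refine ⟨?_, (List.drop_sublist n l).nodup hnd, ?_, ?_⟩
  · have : 0 < (l.drop n).length := by rw [List.length_drop]; omega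
    exact List.ne_nil_of_length_pos this
  · intro i hi
    rw [List.length_drop] at hi
    rw [getD_drop, getD_drop, ← Nat.add_assoc]
    exact hstep (n + i) (by omega)
  · intro i h1 h2
    rw [List.length_drop] at h2
    rw [turnAt_drop (by omega), turnAt_drop (by omega), ← Nat.add_assoc]
    exact hturn (n + i) (by omega) (by omega)

lemma walk_map {f : ℤ × ℤ → ℤ × ℤ} (hinj : Function.Injective f)
    (hstep : ∀ u v, taxiStep u v → taxiStep (f u) (f v))
    (hperp : ∀ a b c d, perp (f a - f b) (f c - f d) ↔ perp (a - b) (c - d))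
    {l : List (ℤ × ℤ)} (h : IsTaxiWalk l) : IsTaxiWalk (l.map f) := by
  obtain ⟨hne, hnd, hstep', hturn⟩ := h
  refine ⟨by simpa using hne, hnd.map hinj, ?_, ?_⟩
  · intro i hi
    rw [List.length_map] at hi
    rw [getD_map' (by omega), getD_map' (by omega)]
    exact hstep _ _ (hstep' i hi)
  · intro i h1 h2
    rw [List.length_map] at h2
    rw [turnAt_map hperp (by omega) (by omega), turnAt_map hperp (by omega) (by omega)]
    exact hturn i h1 h2

lemma walk_map_smap {p : ℤ × ℤ} (hp : Even p.2) {l : List (ℤ × ℤ)} (h : IsTaxiWalk l) :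
    IsTaxiWalk (l.map (smap p)) :=
  walk_map (smap_injective p) (fun _ _ => taxiStep_smap hp) (perp_smap p) h

lemma walk_map_imap {p : ℤ × ℤ} (hp : Even p.2) {l : List (ℤ × ℤ)} (h : IsTaxiWalk l) :
    IsTaxiWalk (l.map (imap p)) :=
  walk_map (imap_injective p) (fun _ _ => taxiStep_imap hp) (perp_imap p) h

/-! ### basic bridge lemmas -/

lemma step_right {u v : ℤ × ℤ} (h : taxiStep u v) (h2 : v = u + (1, 0)) : Even u.2 := by
  rcases h with ⟨he, rfl⟩ | ⟨he, h'⟩ | ⟨he, h'⟩ | ⟨he, h'⟩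
  · exact he
  all_goals (rw [Prod.ext_iff] at h2; rw [h'] at h2; simp at h2 <;> omega)

/-- the last step of a bridge is `+(1,0)`, in particular the endpoint ordinate is even -/
lemma bridge_last_step {l : List (ℤ × ℤ)} (h : IsBridge l) :
    l.getD (l.length - 1) 0 = l.getD (l.length - 2) 0 + (1, 0) := by
  obtain ⟨⟨hne, hnd, hstep, hturn⟩, hlen, h0, h1, hx, hy, hmax⟩ := h
  have hs := hstep (l.length - 2) (by omega)
  have he : l.length - 2 + 1 = l.length - 1 := by omega
  rw [he] at hs
  have hm := hmax (l.length - 2) (by omega)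
  rcases hs with ⟨hp, h'⟩ | ⟨hp, h'⟩ | ⟨hp, h'⟩ | ⟨hp, h'⟩
  · rw [h']; simp [Prod.ext_iff]
  · rw [h'] at hm; simp at hm
  · rw [h'] at hy; simp at hy
  · rw [h'] at hy; simp at hy

lemma bridge_endpoint_even {l : List (ℤ × ℤ)} (h : IsBridge l) :
    Even (l.getD (l.length - 1) 0).2 := by
  have h2 := bridge_last_step h
  obtain ⟨⟨hne, hnd, hstep, hturn⟩, hlen, h0, h1, hx, hy, hmax⟩ := h
  have hs := hstep (l.length - 2) (by omega)
  have he : l.length - 2 + 1 = l.length - 1 := by omega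
  rw [he] at hs
  have := step_right hs h2
  rw [h2]
  simpa using this


/-! ### more coordinate helpers -/

lemma smap_shift (p : ℤ × ℤ) : smap p (p + (1, 0)) = (1, 0) := by
  rcases sgn_eq_or p with h | h <;> simp [smap, h]

lemma smap_snd_eq_iff (p a b : ℤ × ℤ) : (smap p a).2 = (smap p b).2 ↔ a.2 = b.2 := by
  rcases sgn_eq_or p with h | h <;> (simp only [smap, h]; constructor <;> intro hh <;> omega)

lemma length_sufmap {l : List (ℤ × ℤ)} {j : ℕ} {p : ℤ × ℤ} :
    ((l.drop j).map (smap p)).length = l.length - j := by simp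

lemma getD_sufmap {l : List (ℤ × ℤ)} {p : ℤ × ℤ} {j k : ℕ} (h : j + k < l.length) :
    ((l.drop j).map (smap p)).getD k 0 = smap p (l.getD (j + k) 0) := by
  rw [getD_map' (by simp; omega), getD_drop]

/-! ### suffix and prefix bridge lemmas -/

lemma suffix_bridge {l : List (ℤ × ℤ)} (hb : IsBridge l) {j : ℕ}
    (hj2 : j + 2 ≤ l.length)
    (hstep : l.getD (j + 1) 0 = l.getD j 0 + (1, 0))
    (hge : ∀ k, j < k → k < l.length → (l.getD j 0).1 + 1 ≤ (l.getD k 0).1) :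
    IsBridge ((l.drop j).map (smap (l.getD j 0))) := by
  obtain ⟨hw, hlen, h0, h1, hx, hy, hmax⟩ := hb
  have hyj : Even (l.getD j 0).2 := step_right (hw.2.2.1 j (by omega)) hstep
  have hL : ((l.drop j).map (smap (l.getD j 0))).length = l.length - j := length_sufmap
  have e1 : j + (l.length - j - 1) = l.length - 1 := by omega
  have e2 : j + (l.length - j - 2) = l.length - 2 := by omega
  refine ⟨walk_map_smap hyj (walk_drop hw (by omega)), by rw [hL]; omega, ?_, ?_, ?_, ?_, ?_⟩
  · rw [getD_sufmap (by omega)]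
    simpa using smap_self _
  · rw [getD_sufmap (by omega), hstep, smap_shift]
  · intro k hk1 hk2
    rw [hL] at hk2
    rw [getD_sufmap (by omega), smap_fst]
    have := hge (j + k) (by omega) (by omega)
    omega
  · rw [hL, getD_sufmap (by omega), getD_sufmap (by omega), e1, e2,
      smap_snd_eq_iff]
    exact hy
  · intro k hk
    rw [hL] at hk
    rw [hL, getD_sufmap (by omega), getD_sufmap (by omega), e1, smap_fst, smap_fst]
    have := hmax (j + k) (by omega)
    omega

lemma prefix_bridge {m : List (ℤ × ℤ)} (hb : IsBridge m) {t : ℕ}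
    (ht : 1 ≤ t) (htl : t < m.length)
    (hy : (m.getD t 0).2 = (m.getD (t - 1) 0).2)
    (hmx : ∀ k, k ≤ t → (m.getD k 0).1 ≤ (m.getD t 0).1) :
    IsBridge (m.take (t + 1)) := by
  obtain ⟨hw, hlen, h0, h1, hx, hy', hmax⟩ := hb
  have hL : (m.take (t + 1)).length = t + 1 := by rw [List.length_take]; omega
  refine ⟨walk_take hw (by omega), by rw [hL]; omega, ?_, ?_, ?_, ?_, ?_⟩
  · rw [getD_take (by omega)]; exact h0
  · rw [getD_take (by omega)]; exact h1
  · intro k hk1 hk2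
    rw [hL] at hk2
    rw [getD_take (by omega)]
    exact hx k hk1 (by omega)
  · rw [hL]
    simp only [Nat.add_sub_cancel]
    have e : t + 1 - 2 = t - 1 := by omega
    rw [e, getD_take (by omega), getD_take (by omega)]
    exact hy
  · intro k hk
    rw [hL] at hk
    rw [hL]
    simp only [Nat.add_sub_cancel]
    rw [getD_take (by omega), getD_take (by omega)]
    exact hmx k (by omega)

/-! ### cut vertices via `smap` -/

lemma cutAt_iff_smap {l : List (ℤ × ℤ)} (hw : IsTaxiWalk l) {i : ℕ} :
    IsCutAt l i ↔ (0 < i ∧ i + 1 < l.length ∧ IsBridge (l.take (i + 1)) ∧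
      l.getD (i + 1) 0 = l.getD i 0 + (1, 0) ∧
      IsBridge ((l.drop i).map (smap (l.getD i 0)))) := by
  constructor
  · rintro ⟨h1, h2, h3, h4, h5⟩
    have hev : Even (l.getD i 0).2 := step_right (hw.2.2.1 i (by omega)) h4
    rw [normMap_eq_smap hev] at h5
    exact ⟨h1, h2, h3, h4, h5⟩
  · rintro ⟨h1, h2, h3, h4, h5⟩
    have hev : Even (l.getD i 0).2 := step_right (hw.2.2.1 i (by omega)) h4
    rw [← normMap_eq_smap hev] at h5
    exact ⟨h1, h2, h3, h4, h5⟩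

/-! ### transfer of cutvertices between a bridge and its prefixes -/

lemma cut_restrict {l : List (ℤ × ℤ)} (hb : IsBridge l) {i j : ℕ}
    (hi : IsCutAt l i) (hji : j < i) (hj : IsCutAt l j) :
    IsCutAt (l.take (i + 1)) j := by
  rw [cutAt_iff_smap hb.1] at hi hj
  obtain ⟨hi0, hi1, hpb, histep, hisuf⟩ := hi
  obtain ⟨hj0, hj1, hpjb, hjstep, hjsuf⟩ := hj
  have hpw : IsTaxiWalk (l.take (i + 1)) := hpb.1
  rw [cutAt_iff_smap hpw]
  have hlen : (l.take (i + 1)).length = i + 1 := by rw [List.length_take]; omega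
  have hgj : (l.take (i + 1)).getD j 0 = l.getD j 0 := getD_take (by omega)
  refine ⟨hj0, by omega, ?_, ?_, ?_⟩
  · rw [List.take_take]
    have : min (j + 1) (i + 1) = j + 1 := by omega
    rw [this]
    exact hpjb
  · rw [getD_take (by omega), hgj]
    exact hjstep
  · rw [hgj]
    have hdt : (l.take (i + 1)).drop j = (l.drop j).take (i + 1 - j) := List.drop_take ..
    rw [hdt, List.map_take]
    have e0 : i + 1 - j = (i - j) + 1 := by omega
    rw [e0]
    obtain ⟨hw2, hlen2, h02, h12, hx2, hy2, hmax2⟩ := hpb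
    refine prefix_bridge hjsuf (by omega) (by rw [length_sufmap]; omega) ?_ ?_
    · rw [getD_sufmap (by omega), getD_sufmap (by omega)]
      have e1 : j + (i - j) = i := by omega
      have e2 : j + (i - j - 1) = i - 1 := by omega
      rw [e1, e2, smap_snd_eq_iff]
      rw [hlen] at hy2
      simp only [Nat.add_sub_cancel] at hy2
      have e3 : i + 1 - 2 = i - 1 := by omega
      rw [e3, getD_take (by omega), getD_take (by omega)] at hy2
      exact hy2
    · intro k hk
      rw [getD_sufmap (by omega), getD_sufmap (by omega), smap_fst, smap_fst]
      have e1 : j + (i - j) = i := by omega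
      rw [e1]
      have := hmax2 (j + k) (by omega)
      rw [hlen] at this
      simp only [Nat.add_sub_cancel] at this
      rw [getD_take (by omega), getD_take (by omega)] at this
      omega

lemma cut_lift {l : List (ℤ × ℤ)} (hb : IsBridge l) {i j : ℕ}
    (hi : IsCutAt l i) (hj0 : 0 < j) (hji : j < i)
    (hjp : IsCutAt (l.take (i + 1)) j) : IsCutAt l j := by
  rw [cutAt_iff_smap hb.1] at hi ⊢
  obtain ⟨hi0, hi1, hpb, histep, hisuf⟩ := hi
  rw [cutAt_iff_smap hpb.1] at hjp
  obtain ⟨_, _, hpjb, hjpstep, hjpsuf⟩ := hjp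
  have hlen : (l.take (i + 1)).length = i + 1 := by rw [List.length_take]; omega
  have hgj : (l.take (i + 1)).getD j 0 = l.getD j 0 := getD_take (by omega)
  have hstepj : l.getD (j + 1) 0 = l.getD j 0 + (1, 0) := by
    rw [← getD_take (show j + 1 < i + 1 by omega), ← hgj]
    exact hjpstep
  refine ⟨hj0, by omega, ?_, hstepj, ?_⟩
  · rw [List.take_take] at hpjb
    have : min (j + 1) (i + 1) = j + 1 := by omega
    rwa [this] at hpjb
  · -- rewrite hjpsuf into prefix-of-suffix form
    rw [hgj] at hjpsuf
    have hdt : (l.take (i + 1)).drop j = (l.drop j).take (i + 1 - j) := List.drop_take ..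
    rw [hdt, List.map_take] at hjpsuf
    refine suffix_bridge hb (by omega) hstepj ?_
    intro k hk1 hk2
    by_cases hki : k ≤ i
    · obtain ⟨_, _, _, _, hx3, _, _⟩ := hjpsuf
      have := hx3 (k - j) (by omega) (by rw [List.length_take, length_sufmap]; omega)
      rw [getD_take (by omega), getD_sufmap (by omega), smap_fst] at this
      have e : j + (k - j) = k := by omega
      rw [e] at this
      omega
    · -- k > i
      obtain ⟨_, _, _, _, hx4, _, _⟩ := hisuf
      have h1 := hx4 (k - i) (by omega) (by rw [length_sufmap]; omega)
      rw [getD_sufmap (by omega), smap_fst] at h1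
      have e : i + (k - i) = k := by omega
      rw [e] at h1
      -- and x_i ≥ x_j + 1
      obtain ⟨_, _, _, _, _, _, hmax2⟩ := hpb
      have h2 := hmax2 (j + 1) (by omega)
      rw [hlen] at h2
      simp only [Nat.add_sub_cancel] at h2
      rw [getD_take (by omega), getD_take (by omega), hstepj] at h2
      simp only [Prod.fst_add] at h2
      omega


/-! ### gluing two bridges -/

lemma imap_snd_eq_iff (p a b : ℤ × ℤ) : (imap p a).2 = (imap p b).2 ↔ a.2 = b.2 := by
  rcases sgn_eq_or p with h | h <;> (simp only [imap, h]; constructor <;> intro hh <;> omega)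

lemma imap_shift (p : ℤ × ℤ) : imap p (1, 0) = p + (1, 0) := by
  rcases sgn_eq_or p with h | h <;> (simp [imap, h, Prod.ext_iff]; ring)

def glue (p q : List (ℤ × ℤ)) : List (ℤ × ℤ) :=
  p ++ (q.drop 1).map (imap (p.getD (p.length - 1) 0))

lemma length_glue {p q : List (ℤ × ℤ)} : (glue p q).length = p.length + (q.length - 1) := by
  simp [glue]

lemma getD_glue_left {p q : List (ℤ × ℤ)} {k : ℕ} (hk : k < p.length) :
    (glue p q).getD k 0 = p.getD k 0 := by
  unfold glue
  exact List.getD_append _ _ _ _ hk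

lemma getD_glue_right {p q : List (ℤ × ℤ)} {k : ℕ} (hp1 : 1 ≤ p.length)
    (h0 : q.getD 0 0 = (0, 0)) (hk : k < q.length) :
    (glue p q).getD (p.length - 1 + k) 0 = imap (p.getD (p.length - 1) 0) (q.getD k 0) := by
  rcases k with _ | m
  · rw [Nat.add_zero, getD_glue_left (by omega), h0, imap_zero]
  · unfold glue
    have e1 : p.length - 1 + (m + 1) = p.length + m := by omega
    rw [e1, List.getD_append_right _ _ _ _ (by omega)]
    have e2 : p.length + m - p.length = m := by omega
    rw [e2, getD_map' (by simp; omega), getD_drop, Nat.add_comm 1 m]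

lemma drop_last_singleton {l : List (ℤ × ℤ)} (h : l ≠ []) :
    l.drop (l.length - 1) = [l.getD (l.length - 1) 0] := by
  have hl : 0 < l.length := List.length_pos_iff.mpr h
  apply List.ext_getElem
  · simp; omega
  · intro n h1 h2
    simp only [List.length_drop] at h1
    have hn : n = 0 := by omega
    subst hn
    rw [List.getElem_drop]
    simp only [List.getElem_cons_zero]
    rw [getD_lt (by omega)]
    congr 1

lemma eq_cons_getD {l : List (ℤ × ℤ)} (h : l ≠ []) : l = l.getD 0 0 :: l.drop 1 := by
  cases l with
  | nil => exact absurd rfl h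
  | cons a t => rfl

lemma glue_take {p q : List (ℤ × ℤ)} : (glue p q).take p.length = p := by
  unfold glue
  exact List.take_left

lemma map_smap_imap (e : ℤ × ℤ) (t : List (ℤ × ℤ)) :
    (t.map (imap e)).map (smap e) = t := by
  rw [List.map_map, show smap e ∘ imap e = id from funext (smap_imap e), List.map_id]

lemma map_imap_smap (e : ℤ × ℤ) (t : List (ℤ × ℤ)) :
    (t.map (smap e)).map (imap e) = t := by
  rw [List.map_map, show imap e ∘ smap e = id from funext (imap_smap e), List.map_id]

lemma glue_drop_smap {p q : List (ℤ × ℤ)} (hpne : p ≠ []) (hqne : q ≠ [])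
    (h0 : q.getD 0 0 = (0, 0)) :
    ((glue p q).drop (p.length - 1)).map (smap (p.getD (p.length - 1) 0)) = q := by
  unfold glue
  rw [List.drop_append_of_le_length (by omega), drop_last_singleton hpne]
  rw [List.map_append, map_smap_imap]
  simp only [List.map_cons, List.map_nil, smap_self]
  rw [List.singleton_append, ← h0]
  exact (eq_cons_getD hqne).symm

lemma glue_reconstruct {l : List (ℤ × ℤ)} {i : ℕ} (hi : i + 1 ≤ l.length) :
    glue (l.take (i + 1)) ((l.drop i).map (smap (l.getD i 0))) = l := by
  unfold glue
  have hlen : (l.take (i + 1)).length = i + 1 := by rw [List.length_take]; omega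
  rw [hlen]
  simp only [Nat.add_sub_cancel]
  rw [getD_take (by omega)]
  rw [← List.map_drop]
  have e1 : (l.drop i).drop 1 = l.drop (i + 1) := by
    rw [List.drop_drop]
  rw [e1, map_imap_smap]
  exact List.take_append_drop _ _


lemma glue_bridge {p q : List (ℤ × ℤ)} (hp : IsBridge p) (hq : IsBridge q) :
    IsBridge (glue p q) := by
  have hev : Even (p.getD (p.length - 1) 0).2 := bridge_endpoint_even hp
  have hlast : p.getD (p.length - 1) 0 = p.getD (p.length - 2) 0 + (1, 0) := bridge_last_step hp
  obtain ⟨hpw, hplen, hp0, hp1, hpx, hpy, hpmax⟩ := hp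
  obtain ⟨hqw, hqlen, hq0, hq1, hqx, hqy, hqmax⟩ := hq
  have hL : (glue p q).length = p.length + (q.length - 1) := length_glue
  have hGR : ∀ k, k < q.length → (glue p q).getD (p.length - 1 + k) 0
      = imap (p.getD (p.length - 1) 0) (q.getD k 0) :=
    fun k hk => getD_glue_right (by omega) hq0 hk
  -- steps
  have hstep : ∀ k, k + 1 < (glue p q).length →
      taxiStep ((glue p q).getD k 0) ((glue p q).getD (k + 1) 0) := by
    intro k hk
    rw [hL] at hk
    by_cases hkp : k + 1 < p.length
    · rw [getD_glue_left (by omega), getD_glue_left hkp]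
      exact hpw.2.2.1 k hkp
    · obtain ⟨m, rfl⟩ : ∃ m, k = p.length - 1 + m := ⟨k - (p.length - 1), by omega⟩
      have e1 : p.length - 1 + m + 1 = p.length - 1 + (m + 1) := by omega
      rw [e1, hGR m (by omega), hGR (m + 1) (by omega)]
      exact taxiStep_imap hev (hqw.2.2.1 m (by omega))
  -- turns
  have hTL : ∀ k, 1 ≤ k → k + 1 < p.length → (turnAt (glue p q) k ↔ turnAt p k) := by
    intro k h1 h2
    unfold turnAt
    rw [getD_glue_left (by omega), getD_glue_left (by omega), getD_glue_left (by omega)]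
  have hTE : ¬ turnAt (glue p q) (p.length - 1) := by
    unfold turnAt
    rw [show p.length - 1 + 1 = p.length - 1 + 1 from rfl, hGR 1 (by omega)]
    rw [getD_glue_left (show p.length - 1 < p.length by omega),
      getD_glue_left (show p.length - 1 - 1 < p.length by omega)]
    rw [hq1, imap_shift]
    have e2 : p.length - 1 - 1 = p.length - 2 := by omega
    rw [e2, hlast]
    simp [perp]
  have hTR : ∀ m, 1 ≤ m → m + 1 < q.length →
      (turnAt (glue p q) (p.length - 1 + m) ↔ turnAt q m) := by
    intro m h1 h2
    unfold turnAt
    have e1 : p.length - 1 + m - 1 = p.length - 1 + (m - 1) := by omega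
    have e2 : p.length - 1 + m + 1 = p.length - 1 + (m + 1) := by omega
    rw [e1, e2, hGR (m - 1) (by omega), hGR m (by omega), hGR (m + 1) (by omega)]
    exact perp_imap _ _ _ _ _
  have hturn : ∀ k, 1 ≤ k → k + 2 < (glue p q).length →
      ¬(turnAt (glue p q) k ∧ turnAt (glue p q) (k + 1)) := by
    intro k h1 h2 ht
    obtain ⟨t1, t2⟩ := ht
    rw [hL] at h2
    rcases lt_trichotomy (k + 1) (p.length - 1) with hc | hc | hc
    · rw [hTL k h1 (by omega)] at t1
      rw [hTL (k + 1) (by omega) (by omega)] at t2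
      exact hpw.2.2.2 k h1 (by omega) ⟨t1, t2⟩
    · exact hTE (hc ▸ t2)
    · by_cases hk : k = p.length - 1
      · exact hTE (hk ▸ t1)
      · obtain ⟨m, rfl⟩ : ∃ m, k = p.length - 1 + m := ⟨k - (p.length - 1), by omega⟩
        have hm1 : 1 ≤ m := by omega
        have e1 : p.length - 1 + m + 1 = p.length - 1 + (m + 1) := by omega
        rw [hTR m hm1 (by omega)] at t1
        rw [e1, hTR (m + 1) (by omega) (by omega)] at t2
        exact hqw.2.2.2 m hm1 (by omega) ⟨t1, t2⟩
  -- nodup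
  have hnd : (glue p q).Nodup := by
    unfold glue
    rw [List.nodup_append]
    refine ⟨hpw.2.1, ((List.drop_sublist 1 q).nodup hqw.2.1).map (imap_injective _), ?_⟩
    intro a ha b hb rfl
    obtain ⟨n', hn, rfl⟩ := List.mem_iff_getElem.mp ha
    obtain ⟨m, hm, hba⟩ := List.mem_iff_getElem.mp hb
    have hmq : m < q.length - 1 := by simpa using hm
    have h1 : (p[n']).1 ≤ (p.getD (p.length - 1) 0).1 := by
      rw [← getD_lt hn]
      exact hpmax n' hn
    have h2 : ((q.drop 1).map (imap (p.getD (p.length - 1) 0)))[m]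
        = imap (p.getD (p.length - 1) 0) (q.getD (1 + m) 0) := by
      rw [List.getElem_map, ← getD_lt (by simpa using hmq), getD_drop]
    rw [h2] at hba
    have h3 : 1 ≤ (q.getD (1 + m) 0).1 := hqx (1 + m) (by omega) (by omega)
    have h4 := congrArg Prod.fst hba
    rw [imap_fst] at h4
    omega
  have hne : glue p q ≠ [] := by
    apply List.ne_nil_of_length_pos
    omega
  have eL1 : (glue p q).length - 1 = p.length - 1 + (q.length - 1) := by omega
  have eL2 : (glue p q).length - 2 = p.length - 1 + (q.length - 2) := by omega
  refine ⟨⟨hne, hnd, hstep, hturn⟩, by omega, ?_, ?_, ?_, ?_, ?_⟩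
  · rw [getD_glue_left (by omega)]
    exact hp0
  · rw [getD_glue_left (by omega)]
    exact hp1
  · intro k hk1 hk2
    rw [hL] at hk2
    by_cases hkp : k < p.length
    · rw [getD_glue_left hkp]
      exact hpx k hk1 hkp
    · obtain ⟨m, rfl⟩ : ∃ m, k = p.length - 1 + m := ⟨k - (p.length - 1), by omega⟩
      rw [hGR m (by omega), imap_fst]
      have h3 : 1 ≤ (q.getD m 0).1 := hqx m (by omega) (by omega)
      have h4 : 1 ≤ (p.getD (p.length - 1) 0).1 := hpx (p.length - 1) (by omega) (by omega)
      omega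
  · rw [eL1, eL2, hGR (q.length - 1) (by omega), hGR (q.length - 2) (by omega),
      imap_snd_eq_iff]
    exact hqy
  · intro k hk
    rw [hL] at hk
    rw [eL1, hGR (q.length - 1) (by omega), imap_fst]
    have hql : 1 ≤ (q.getD (q.length - 1) 0).1 := hqx (q.length - 1) (by omega) (by omega)
    by_cases hkp : k < p.length
    · rw [getD_glue_left hkp]
      have := hpmax k hkp
      omega
    · obtain ⟨m, rfl⟩ : ∃ m, k = p.length - 1 + m := ⟨k - (p.length - 1), by omega⟩
      rw [hGR m (by omega), imap_fst]
      have := hqmax m (by omega)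
      omega

lemma glue_cut {p q : List (ℤ × ℤ)} (hp : IsBridge p) (hq : IsBridge q) :
    IsCutAt (glue p q) (p.length - 1) := by
  have hgb := glue_bridge hp hq
  rw [cutAt_iff_smap hgb.1]
  have hpne : p ≠ [] := hp.1.1
  have hqne : q ≠ [] := hq.1.1
  have hplen : 2 ≤ p.length := hp.2.1
  have hqlen : 2 ≤ q.length := hq.2.1
  have hq0 : q.getD 0 0 = (0, 0) := hq.2.2.1
  have hq1 : q.getD 1 0 = (1, 0) := hq.2.2.2.1
  have hL : (glue p q).length = p.length + (q.length - 1) := length_glue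
  have hE : (glue p q).getD (p.length - 1) 0 = p.getD (p.length - 1) 0 :=
    getD_glue_left (by omega)
  refine ⟨by omega, by omega, ?_, ?_, ?_⟩
  · have e1 : p.length - 1 + 1 = p.length := by omega
    rw [e1, glue_take]
    exact hp
  · rw [show p.length - 1 + 1 = p.length - 1 + 1 from rfl,
      getD_glue_right (by omega) hq0 (show (1:ℕ) < q.length by omega), hq1, imap_shift, hE]
  · rw [hE, glue_drop_smap hpne hqne hq0]
    exact hq

/-! ### finiteness -/

lemma taxiStep_det {u v w : ℤ × ℤ} (hv : taxiStep u v) (hw : taxiStep u w)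
    (h : v.1 = u.1 ↔ w.1 = u.1) : v = w := by
  rcases hv with ⟨h1, rfl⟩ | ⟨h1, rfl⟩ | ⟨h1, rfl⟩ | ⟨h1, rfl⟩ <;>
    rcases hw with ⟨h2, rfl⟩ | ⟨h2, rfl⟩ | ⟨h2, rfl⟩ | ⟨h2, rfl⟩ <;>
    simp [Prod.ext_iff, Int.even_iff, Int.odd_iff] at * <;> omega

lemma bridges_finite (n : ℕ) :
    {l : List (ℤ × ℤ) | IsBridge l ∧ l.length = n}.Finite := by
  set S := {l : List (ℤ × ℤ) | IsBridge l ∧ l.length = n} with hS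
  have key : ∀ l₁ ∈ S, ∀ l₂ ∈ S,
      (∀ i, i + 1 < n →
        ((l₁.getD (i+1) 0).1 = (l₁.getD i 0).1 ↔ (l₂.getD (i+1) 0).1 = (l₂.getD i 0).1)) →
      l₁ = l₂ := by
    rintro l₁ ⟨hb₁, hl₁⟩ l₂ ⟨hb₂, hl₂⟩ hiff
    have main : ∀ i, i < n → l₁.getD i 0 = l₂.getD i 0 := by
      intro i
      induction i with
      | zero => intro _; rw [hb₁.2.2.1, hb₂.2.2.1]
      | succ k ih =>
        intro hk
        have he := ih (by omega)
        have s₁ := hb₁.1.2.2.1 k (by omega)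
        have s₂ := hb₂.1.2.2.1 k (by omega)
        rw [he] at s₁
        have hif := hiff k (by omega)
        rw [he] at hif
        exact taxiStep_det s₁ s₂ hif
    apply List.ext_getElem (by omega)
    intro i h1 h2
    rw [← getD_lt h1, ← getD_lt h2]
    exact main i (by omega)
  have : Finite ↥S := by
    let f : ↥S → (Fin n → Bool) := fun l i =>
      decide ((l.1.getD (i.1 + 1) 0).1 = (l.1.getD i.1 0).1)
    apply Finite.of_injective f
    intro a b hab
    apply Subtype.ext
    apply key a.1 a.2 b.1 b.2
    intro i hi
    have := congrFun hab ⟨i, by omega⟩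
    simpa [f, decide_eq_decide] using this
  exact Set.finite_coe_iff.mp this

lemma irr_finite (n : ℕ) :
    {l : List (ℤ × ℤ) | IsIrreducibleBridge l ∧ l.length = n}.Finite :=
  (bridges_finite n).subset (fun _ h => ⟨h.1.1, h.2⟩)


/-! ### counting -/

attribute [local instance] Classical.propDecidable

noncomputable def cfun (l : List (ℤ × ℤ)) : ℕ :=
  if h : ∃ i, IsCutAt l i then Nat.find h else l.length - 1

noncomputable def Bfin (s : ℕ) : Finset (List (ℤ × ℤ)) := (bridges_finite (s + 1)).toFinset
noncomputable def Ifin (s : ℕ) : Finset (List (ℤ × ℤ)) := (irr_finite (s + 1)).toFinset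

lemma mem_Bfin {s : ℕ} {l : List (ℤ × ℤ)} :
    l ∈ Bfin s ↔ IsBridge l ∧ l.length = s + 1 := by
  simp [Bfin, Set.Finite.mem_toFinset]

lemma mem_Ifin {s : ℕ} {l : List (ℤ × ℤ)} :
    l ∈ Ifin s ↔ IsIrreducibleBridge l ∧ l.length = s + 1 := by
  simp [Ifin, Set.Finite.mem_toFinset]

lemma bridgeCount_eq_card {s : ℕ} (hs : 1 ≤ s) : bridgeCount s = (Bfin s).card := by
  obtain ⟨m, rfl⟩ : ∃ m, s = m + 1 := ⟨s - 1, by omega⟩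
  show Set.ncard _ = _
  rw [Set.ncard_eq_toFinset_card _ (bridges_finite (m + 1 + 1))]
  rfl

lemma irrCount_eq_card {s : ℕ} (hs : 1 ≤ s) : irrBridgeCount s = (Ifin s).card := by
  obtain ⟨m, rfl⟩ : ∃ m, s = m + 1 := ⟨s - 1, by omega⟩
  show Set.ncard _ = _
  rw [Set.ncard_eq_toFinset_card _ (irr_finite (m + 1 + 1))]
  rfl

lemma cfun_spec {l : List (ℤ × ℤ)} {t : ℕ} (hlt : t < l.length - 1) (hc : cfun l = t) :
    IsCutAt l t ∧ ∀ j, j < t → ¬ IsCutAt l j := by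
  by_cases hex : ∃ i, IsCutAt l i
  · unfold cfun at hc
    rw [dif_pos hex] at hc
    exact ⟨hc ▸ Nat.find_spec hex, fun j hj => Nat.find_min hex (by rw [hc]; exact hj)⟩
  · unfold cfun at hc
    rw [dif_neg hex] at hc
    omega

lemma fiber_card {n t : ℕ} (ht1 : 1 ≤ t) (htn : t < n) :
    ((Bfin n).filter (fun l => cfun l = t)).card = (Ifin t).card * (Bfin (n - t)).card := by
  rw [← Finset.card_product]
  refine Finset.card_bij'
    (fun l _ => (l.take (t + 1), (l.drop t).map (smap (l.getD t 0))))
    (fun pq _ => glue pq.1 pq.2) ?_ ?_ ?_ ?_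
  · intro l hl
    rw [Finset.mem_filter, mem_Bfin] at hl
    obtain ⟨⟨hb, hlen⟩, hc⟩ := hl
    obtain ⟨hcut, hmin⟩ := cfun_spec (by omega) hc
    obtain ⟨h0, h1, hpb, hstep, hsuf⟩ := (cutAt_iff_smap hb.1).mp hcut
    rw [Finset.mem_product, mem_Ifin, mem_Bfin]
    refine ⟨⟨⟨hpb, ?_⟩, by rw [List.length_take]; omega⟩, hsuf, by rw [length_sufmap]; omega⟩
    intro j hcj
    have hj0 : 0 < j := hcj.1
    have hjlt : j < t := by
      have h2 := hcj.2.1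
      rw [List.length_take] at h2
      omega
    exact hmin j hjlt (cut_lift hb hcut hj0 hjlt hcj)
  · intro pq hpq
    rw [Finset.mem_product, mem_Ifin, mem_Bfin] at hpq
    obtain ⟨⟨hip, hplen⟩, hqb, hqlen⟩ := hpq
    rw [Finset.mem_filter, mem_Bfin]
    have hgb := glue_bridge hip.1 hqb
    have hglen : (glue pq.1 pq.2).length = n + 1 := by
      rw [length_glue]; omega
    have hc : IsCutAt (glue pq.1 pq.2) t := by
      have h3 := glue_cut hip.1 hqb
      rwa [show pq.1.length - 1 = t by omega] at h3
    refine ⟨⟨hgb, hglen⟩, ?_⟩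
    have hex : ∃ i, IsCutAt (glue pq.1 pq.2) i := ⟨t, hc⟩
    unfold cfun
    rw [dif_pos hex, Nat.find_eq_iff]
    refine ⟨hc, ?_⟩
    intro j hjt hcj
    rcases Nat.eq_zero_or_pos j with rfl | hj0
    · exact absurd hcj.1 (lt_irrefl 0)
    · have h2 := cut_restrict hgb hc hjt hcj
      rw [show t + 1 = pq.1.length by omega, glue_take] at h2
      exact hip.2 j h2
  · intro l hl
    rw [Finset.mem_filter, mem_Bfin] at hl
    exact glue_reconstruct (by omega)
  · intro pq hpq
    rw [Finset.mem_product, mem_Ifin, mem_Bfin] at hpq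
    obtain ⟨⟨hip, hplen⟩, hqb, hqlen⟩ := hpq
    have h1 : (glue pq.1 pq.2).take (t + 1) = pq.1 := by
      rw [show t + 1 = pq.1.length by omega, glue_take]
    have hE : (glue pq.1 pq.2).getD t 0 = pq.1.getD (pq.1.length - 1) 0 := by
      rw [show t = pq.1.length - 1 by omega, getD_glue_left (by omega)]
    have h2 : ((glue pq.1 pq.2).drop t).map (smap ((glue pq.1 pq.2).getD t 0)) = pq.2 := by
      rw [hE, show t = pq.1.length - 1 by omega,
        glue_drop_smap hip.1.1.1 hqb.1.1 hqb.2.2.1]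
    exact Prod.ext_iff.mpr ⟨h1, h2⟩

lemma fiber_top {n : ℕ} (hn : 1 ≤ n) :
    (Bfin n).filter (fun l => cfun l = n) = Ifin n := by
  ext l
  rw [Finset.mem_filter, mem_Bfin, mem_Ifin]
  constructor
  · rintro ⟨⟨hb, hlen⟩, hc⟩
    refine ⟨⟨hb, ?_⟩, hlen⟩
    intro i hci
    have hex : ∃ i, IsCutAt l i := ⟨i, hci⟩
    unfold cfun at hc
    rw [dif_pos hex] at hc
    have h1 := Nat.find_spec hex
    have h2 := h1.2.1
    omega
  · rintro ⟨⟨hb, hirr⟩, hlen⟩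
    refine ⟨⟨hb, hlen⟩, ?_⟩
    unfold cfun
    rw [dif_neg (by rintro ⟨i, hi⟩; exact hirr i hi)]
    omega

lemma sum_Icc_reflect (n : ℕ) (g : ℕ → ℕ) :
    ∑ t ∈ Finset.Icc 1 n, g t = ∑ k ∈ Finset.range n, g (n - k) := by
  refine Finset.sum_nbij' (fun t => n - t) (fun k => n - k) ?_ ?_ ?_ ?_ ?_
  · intro a ha; rw [Finset.mem_Icc] at ha; rw [Finset.mem_range]; omega
  · intro a ha; rw [Finset.mem_range] at ha; rw [Finset.mem_Icc]; omega
  · intro a ha; rw [Finset.mem_Icc] at ha; omega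
  · intro a ha; rw [Finset.mem_range] at ha; omega
  · intro a ha; rw [Finset.mem_Icc] at ha
    rw [show n - (n - a) = a by omega]

lemma bridge_recurrence (n : ℕ) (hn : 1 ≤ n) :
    bridgeCount n = ∑ k ∈ Finset.range n, irrBridgeCount (n - k) * bridgeCount k := by
  have hmap : ∀ l ∈ Bfin n, cfun l ∈ Finset.Icc 1 n := by
    intro l hl
    rw [mem_Bfin] at hl
    obtain ⟨hb, hlen⟩ := hl
    rw [Finset.mem_Icc]
    by_cases hex : ∃ i, IsCutAt l i
    · unfold cfun
      rw [dif_pos hex]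
      have h1 := Nat.find_spec hex
      have h2 := h1.1
      have h3 := h1.2.1
      omega
    · unfold cfun
      rw [dif_neg hex]
      omega
  calc bridgeCount n = (Bfin n).card := bridgeCount_eq_card hn
    _ = ∑ t ∈ Finset.Icc 1 n, ((Bfin n).filter (fun l => cfun l = t)).card :=
        Finset.card_eq_sum_card_fiberwise hmap
    _ = ∑ t ∈ Finset.Icc 1 n, irrBridgeCount t * bridgeCount (n - t) := by
        apply Finset.sum_congr rfl
        intro t ht
        rw [Finset.mem_Icc] at ht
        rcases eq_or_lt_of_le ht.2 with rfl | hlt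
        · rw [fiber_top ht.1, Nat.sub_self]
          have hb0 : bridgeCount 0 = 1 := rfl
          rw [hb0, mul_one, irrCount_eq_card ht.1]
        · rw [fiber_card ht.1 hlt, irrCount_eq_card ht.1, bridgeCount_eq_card (by omega)]
    _ = ∑ k ∈ Finset.range n, irrBridgeCount (n - k) * bridgeCount (n - (n - k)) :=
        sum_Icc_reflect n _
    _ = ∑ k ∈ Finset.range n, irrBridgeCount (n - k) * bridgeCount k := by
        apply Finset.sum_congr rfl
        intro k hk
        rw [Finset.mem_range] at hk
        rw [show n - (n - k) = k by omega]

end TaxiGF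

open TaxiGF in
/-- As an identity of formal power series, `B(x)·(1 − A(x)) = 1`, where
`B(x) = Σ_{k≥0} b_k x^k` and `A(x) = Σ_{ℓ≥1} a_ℓ x^ℓ` (note `a_0 = 0`); equivalently
`B(x) = 1/(1 − A(x))`. -/
theorem bridge_generating_function_identity :
    (PowerSeries.mk fun k => (bridgeCount k : ℤ)) *
      (1 - PowerSeries.mk fun k => (irrBridgeCount k : ℤ)) = 1 := by
  apply PowerSeries.ext
  intro n
  rw [PowerSeries.coeff_mul]
  simp only [map_sub, PowerSeries.coeff_one, PowerSeries.coeff_mk]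
  rw [Finset.Nat.sum_antidiagonal_eq_sum_range_succ_mk]
  rcases Nat.eq_zero_or_pos n with rfl | hn
  · norm_num
    have h1 : bridgeCount 0 = 1 := rfl
    have h2 : irrBridgeCount 0 = 0 := rfl
    rw [h1, h2]
    norm_num
  · have hrec := bridge_recurrence n hn
    have hc : (bridgeCount n : ℤ)
        = ∑ k ∈ Finset.range n, (irrBridgeCount (n - k) : ℤ) * (bridgeCount k : ℤ) := by
      have h4 := congrArg (Nat.cast : ℕ → ℤ) hrec
      push_cast at h4
      exact h4
    rw [Nat.succ_eq_add_one, Finset.sum_range_succ]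
    have hlast : (bridgeCount n : ℤ) * ((if n - n = 0 then (1 : ℤ) else 0) - (irrBridgeCount (n - n) : ℤ))
        = (bridgeCount n : ℤ) := by
      rw [Nat.sub_self]
      have h2 : irrBridgeCount 0 = 0 := rfl
      rw [h2]
      norm_num
    rw [hlast]
    have hterms : ∀ k ∈ Finset.range n,
        (bridgeCount k : ℤ) * ((if n - k = 0 then (1 : ℤ) else 0) - (irrBridgeCount (n - k) : ℤ))
        = -((irrBridgeCount (n - k) : ℤ) * (bridgeCount k : ℤ)) := by
      intro k hk
      rw [Finset.mem_range] at hk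
      rw [if_neg (by omega)]
      ring
    rw [Finset.sum_congr rfl hterms, Finset.sum_neg_distrib, ← hc]
    rw [if_neg (by omega)]
    ring
end
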